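/- arXiv:0706.3937 — 12 statements merged into one kernel-verified Lean document; each statement's English description precedes it below -/
import Mathlib

section
/- A surjective function f : X → Y from a uniform space X has the uniqueness of chain lifts property (for every entourage E of X there is an entourage F of X such that any two F-chains with the same image under f and the same origin are equal) if and only if there exists an entourage E₀ of X transverse to f, i.e. (x,y) ∈ E₀ and f(x) = f(y) implies x = y. -/
open UniformSpace Filter Function
open scoped Uniformity

universe u v

variable {X : Type u} {Y : Type v}

/-- An `E`-chain: consecutive pairs belong to `E`. -/
def IsEChain (E : Set (X × X)) (l : List X) : Prop :=
  l.Chain' fun a b => (a, b) ∈ E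

/-- The image `f(E)` of a relation under `f`. -/
def fimg (f : X → Y) (E : Set (X × X)) : Set (Y × Y) := Prod.map f f '' E

lemma chain_lift_unique {f : X → Y} {E₀ F : Set (X × X)}
    (hsym : ∀ {x y : X}, (x, y) ∈ F → (y, x) ∈ F)
    (hcomp : ∀ {x y z : X}, (x, y) ∈ F → (y, z) ∈ F → (x, z) ∈ E₀)
    (htr : ∀ x y : X, (x, y) ∈ E₀ → f x = f y → x = y) :
    ∀ α β : List X, IsEChain F α → IsEChain F β → α.head? = β.head? →
      α.map f = β.map f → α = β := by
  intro α
  induction α with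
  | nil =>
    intro β _ _ _ hmap
    exact (List.map_eq_nil_iff.mp hmap.symm).symm
  | cons x α' ih =>
    intro β hα hβ hhead hmap
    cases β with
    | nil => simp at hmap
    | cons y β' =>
      simp only [List.head?_cons, Option.some.injEq] at hhead
      subst hhead
      simp only [List.map_cons, List.cons.injEq] at hmap
      have hα' : IsEChain F α' := hα.tail
      have hβ' : IsEChain F β' := hβ.tail
      have : α' = β' := by
        cases α' with
        | nil =>
          cases β' with
          | nil => rfl
          | cons b β'' => simp at hmap
        | cons a α'' =>
          cases β' with
          | nil => simp at hmap
          | cons b β'' =>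
            have hxa : (x, a) ∈ F := List.isChain_cons_cons.mp hα |>.1
            have hxb : (x, b) ∈ F := List.isChain_cons_cons.mp hβ |>.1
            have hab : (a, b) ∈ E₀ := hcomp (hsym hxa) hxb
            have hfab : f a = f b := by
              simpa using congrArg List.head? hmap.2
            have : a = b := htr a b hab hfab
            subst this
            exact ih (a :: β'') hα' hβ' rfl hmap.2
      rw [this]

/-- A surjective function from a uniform space has the uniqueness of chain lifts
property iff it admits a transverse entourage. -/
theorem uniqueness_of_chain_lifts_iff_transverse_entourage
    [UniformSpace X] (f : X → Y) (hf : Function.Surjective f) :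
    (∀ E ∈ 𝓤 X, ∃ F ∈ 𝓤 X, ∀ α β : List X,
        IsEChain F α → IsEChain F β → α.head? = β.head? → α.map f = β.map f → α = β) ↔
      (∃ E₀ ∈ 𝓤 X, ∀ x y : X, (x, y) ∈ E₀ → f x = f y → x = y) := by
  constructor
  · intro h
    obtain ⟨F, hF, hu⟩ := h Set.univ univ_mem
    refine ⟨F, hF, fun x y hxy hfxy => ?_⟩
    have hxx : (x, x) ∈ F := refl_mem_uniformity hF
    have := hu [x, x] [x, y]
      (by simp [IsEChain, List.Chain', hxx]) (by simp [IsEChain, List.Chain', hxy]) rfl (by simp [hfxy])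
    simpa using this
  · rintro ⟨E₀, hE₀, htr⟩
    intro E hE
    obtain ⟨F, hF, hFsym, hFcomp⟩ := comp_symm_mem_uniformity_sets hE₀
    refine ⟨F, hF, ?_⟩
    exact chain_lift_unique
      (fun h => hFsym.symm _ _ h)
      (fun h1 h2 => hFcomp (SetRel.prodMk_mem_comp h1 h2))
      htr
end

section
/- If a surjective function f : X → Y from a uniform space X to a set Y has the chain lifting property, then the family { f(E) : E an entourage of X } is a base of a uniform structure on Y; that is, for every entourage E of X there is an entourage F of X with f(F)∘f(F) ⊆ f(E) (where composition is relational composition), and moreover f is uniformly open with respect to this structure. -/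
open UniformSpace Filter Function
open scoped Uniformity

universe u v

variable {X : Type u} {Y : Type v}

/-- If a surjective `f` from a uniform space has the chain lifting property, then the
family `f(E)` is a base of a uniform structure on `Y` and `f` is uniformly open
with respect to it. -/
theorem chain_lifting_generates_and_uniformly_open
    [UniformSpace X] (f : X → Y) (hf : Function.Surjective f)
    (hlift : ∀ E ∈ 𝓤 X, ∃ F ∈ 𝓤 X, ∀ x : X, ∀ l : List Y,
        IsEChain (fimg f F) l → l.head? = some (f x) →
        ∃ l' : List X, IsEChain E l' ∧ l'.head? = some x ∧ l'.map f = l) :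
    (∀ E ∈ 𝓤 X, ∃ F ∈ 𝓤 X, SetRel.comp (fimg f F) (fimg f F) ⊆ fimg f E) ∧
      (∀ D ∈ 𝓤 X, ∃ G ∈ 𝓤 X, ∀ x : X,
        {y : Y | (f x, y) ∈ fimg f G} ⊆ f '' {z : X | (x, z) ∈ D}) := by
  constructor
  · intro E hE
    obtain ⟨E', hE', hEE⟩ := comp_mem_uniformity_sets hE
    obtain ⟨F, hF, hFl⟩ := hlift E' hE'
    refine ⟨F, hF, ?_⟩
    rintro ⟨a, c⟩ ⟨b, hab, hbc⟩
    obtain ⟨⟨x1, x2⟩, h12, hx⟩ := hab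
    obtain ⟨⟨x3, x4⟩, h34, hx'⟩ := hbc
    simp only [Prod.map, Prod.mk.injEq] at hx hx'
    obtain ⟨hx1, hx2⟩ := hx
    obtain ⟨hx3, hx4⟩ := hx'
    have hchain : IsEChain (fimg f F) [a, b, c] := by
      refine List.isChain_cons_cons.2 ⟨⟨(x1, x2), h12, by simp [Prod.map, hx1, hx2]⟩, ?_⟩
      refine List.isChain_cons_cons.2 ⟨⟨(x3, x4), h34, by simp [Prod.map, hx3, hx4]⟩, ?_⟩
      simp [List.isChain_singleton]
    obtain ⟨l', hl', hhead, hmap⟩ := hFl x1 [a, b, c] hchain (by simp [hx1])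
    rcases l' with _ | ⟨z1, _ | ⟨z2, _ | ⟨z3, _ | ⟨z4, t⟩⟩⟩⟩ <;>
      simp only [List.map_nil, List.map_cons, List.head?] at hmap hhead
    · exact absurd hmap (by simp)
    · exact absurd hmap (by simp)
    · exact absurd hmap (by simp)
    · simp only [List.cons.injEq, and_true] at hmap
      obtain ⟨hf1, hf2, hf3⟩ := hmap
      have h12' := (List.isChain_cons_cons.1 hl').1
      have h23' := (List.isChain_cons_cons.1 (List.isChain_cons_cons.1 hl').2).1
      have : (z1, z3) ∈ E := hEE ⟨z2, h12', h23'⟩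
      have hz1 : z1 = x1 := by injection hhead
      exact ⟨(z1, z3), this, by simp [Prod.map, hf1, hf3]⟩
    · exact absurd hmap (by simp)
  · intro D hD
    obtain ⟨G, hG, hGl⟩ := hlift D hD
    refine ⟨G, hG, ?_⟩
    intro x y hy
    have hchain : IsEChain (fimg f G) [f x, y] := by
      refine List.isChain_cons_cons.2 ⟨hy, ?_⟩
      simp [List.isChain_singleton]
    obtain ⟨l', hl', hhead, hmap⟩ := hGl x [f x, y] hchain (by simp)
    rcases l' with _ | ⟨z1, _ | ⟨z2, _ | ⟨z3, t⟩⟩⟩ <;>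
      simp only [List.map_nil, List.map_cons, List.head?] at hmap hhead
    · exact absurd hmap (by simp)
    · exact absurd hmap (by simp)
    · simp only [List.cons.injEq, and_true] at hmap
      obtain ⟨hf1, hf2⟩ := hmap
      have h12' := (List.isChain_cons_cons.1 hl').1
      have hz1 : z1 = x := by injection hhead
      exact ⟨z2, by rw [← hz1]; exact h12', hf2⟩
    · exact absurd hmap (by simp)
end

section
/- Let f : X → Y be a function of sets, E a symmetric subset of X×X containing the diagonal. If the induced simplicial map f_E : R(X,E) → R(Y,f(E)) between Rips complexes is a covering map, then E evenly covers f(E), i.e. for every x ∈ X the ball B(x,E) is mapped by f bijectively onto B(f(x),f(E)). -/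
open UniformSpace Filter Function
open scoped Uniformity

universe u v

variable {X : Type u} {Y : Type v}

/-- If the induced simplicial map `f_E : R(X,E) → R(Y,f(E))` is a covering map
(formalized via unique lifting of edge-paths starting at a given vertex), then `E`
evenly covers `f(E)`. -/
theorem evenly_covers_of_rips_covering
    (f : X → Y) (E : Set (X × X))
    (hsym : ∀ x y : X, (x, y) ∈ E → (y, x) ∈ E) (hrefl : ∀ x : X, (x, x) ∈ E)
    (hcov : ∀ x : X, ∀ l : List Y, IsEChain (fimg f E) l → l.head? = some (f x) →
        ∃! l' : List X, IsEChain E l' ∧ l'.head? = some x ∧ l'.map f = l) :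
    ∀ x : X, Set.BijOn f {y : X | (x, y) ∈ E} {z : Y | (f x, z) ∈ fimg f E} := by
  intro x
  refine ⟨?_, ?_, ?_⟩
  · intro y hy
    exact ⟨(x, y), hy, rfl⟩
  · intro y1 h1 y2 h2 hf
    obtain ⟨l', _, hu⟩ := hcov x [f x, f y1]
      (by simp [IsEChain, List.Chain', List.isChain_pair]; exact ⟨(x, y1), h1, rfl⟩) rfl
    have e1 : [x, y1] = l' := hu [x, y1] ⟨by simp [IsEChain, List.Chain', List.isChain_pair]; exact h1, rfl, rfl⟩
    have e2 : [x, y2] = l' := hu [x, y2] ⟨by simp [IsEChain, List.Chain', List.isChain_pair]; exact h2, rfl, by simp [hf]⟩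
    have := e1.trans e2.symm
    simpa using this
  · intro z hz
    obtain ⟨l', ⟨hc, hh, hm⟩, _⟩ := hcov x [f x, z]
      (by simp [IsEChain, List.Chain', List.isChain_pair]; exact hz) rfl
    match l' with
    | [a, b] =>
      simp at hm hh
      obtain ⟨_, hb⟩ := hm
      simp [IsEChain, List.Chain', List.isChain_pair] at hc
      exact ⟨b, by rw [← hh]; exact hc, hb⟩
end

section
/- Let f : X → Y be a function of sets and E, F symmetric reflexive relations on X with E∘E ⊆ F. If F evenly covers f(F) (i.e. f maps B(x,F) bijectively onto B(f(x),f(F)) for each x) and B(x,E) is mapped by f bijectively onto B(f(x),f(E)) for each x ∈ X, then every simplex of R(Y,f(E)) containing a vertex f(x) has a unique lift to a simplex of R(X,E) containing x. -/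
open UniformSpace Filter Function
open scoped Uniformity

universe u v

variable {X : Type u} {Y : Type v}

/-- Unique lifting of simplices of the Rips complex for evenly covering relations. -/
theorem unique_simplex_lift
    (f : X → Y) (E F : Set (X × X))
    (hEsym : ∀ x y : X, (x, y) ∈ E → (y, x) ∈ E) (hErefl : ∀ x : X, (x, x) ∈ E)
    (hFsym : ∀ x y : X, (x, y) ∈ F → (y, x) ∈ F) (hFrefl : ∀ x : X, (x, x) ∈ F)
    (hEF : SetRel.comp E E ⊆ F)
    (hF : ∀ x : X, Set.BijOn f {y : X | (x, y) ∈ F} {z : Y | (f x, z) ∈ fimg f F})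
    (hE : ∀ x : X, Set.BijOn f {y : X | (x, y) ∈ E} {z : Y | (f x, z) ∈ fimg f E}) :
    ∀ (x : X) (Δ : Finset Y), f x ∈ Δ → (∀ a ∈ Δ, ∀ b ∈ Δ, (a, b) ∈ fimg f E) →
      ∃! Δ' : Finset X, x ∈ Δ' ∧ (∀ a ∈ Δ', ∀ b ∈ Δ', (a, b) ∈ E) ∧
        Set.BijOn f (↑Δ' : Set X) (↑Δ : Set Y) := by
  intro x Δ hxΔ hΔ
  classical
  have hEsub : E ⊆ F := by
    rintro ⟨a, b⟩ hab
    exact hEF ⟨a, hErefl a, hab⟩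
  -- key: F-close points with f-images E-close are E-close
  have key : ∀ a b : X, (a, b) ∈ F → (f a, f b) ∈ fimg f E → (a, b) ∈ E := by
    intro a b habF habE
    obtain ⟨c, hc, hfc⟩ := (hE a).surjOn (show f b ∈ {z | (f a, z) ∈ fimg f E} from habE)
    have : b = c := (hF a).injOn habF (hEsub hc) hfc.symm
    rwa [this]
  -- the lift function
  have hex : ∀ z ∈ Δ, ∃ w : X, (x, w) ∈ E ∧ f w = z := by
    intro z hz
    obtain ⟨w, hw, hfw⟩ := (hE x).surjOn
      (show z ∈ {z | (f x, z) ∈ fimg f E} from hΔ (f x) hxΔ z hz)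
    exact ⟨w, hw, hfw⟩
  set g : Y → X := fun z =>
    if h : ∃ w : X, (x, w) ∈ E ∧ f w = z then h.choose else x with hgdef
  have hg : ∀ z ∈ Δ, (x, g z) ∈ E ∧ f (g z) = z := by
    intro z hz
    have h := hex z hz
    simp only [hgdef, dif_pos h]
    exact h.choose_spec
  set Δ' : Finset X := Δ.image g with hΔ'def
  have hmemE : ∀ a ∈ Δ', (x, a) ∈ E := by
    intro a ha
    obtain ⟨z, hz, rfl⟩ := Finset.mem_image.mp ha
    exact (hg z hz).1
  have hmemf : ∀ a ∈ Δ', f a ∈ Δ := by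
    intro a ha
    obtain ⟨z, hz, rfl⟩ := Finset.mem_image.mp ha
    rw [(hg z hz).2]; exact hz
  have hinj : ∀ a b : X, (x, a) ∈ E → (x, b) ∈ E → f a = f b → a = b :=
    fun a b ha hb hfab => (hE x).injOn ha hb hfab
  have hxΔ' : x ∈ Δ' := by
    have h1 := hg (f x) hxΔ
    have : g (f x) = x := hinj _ _ h1.1 (hErefl x) h1.2
    rw [← this]
    exact Finset.mem_image_of_mem g hxΔ
  have hpairs : ∀ a ∈ Δ', ∀ b ∈ Δ', (a, b) ∈ E := by
    intro a ha b hb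
    have habF : (a, b) ∈ F := hEF ⟨x, hEsym x a (hmemE a ha), hmemE b hb⟩
    exact key a b habF (hΔ (f a) (hmemf a ha) (f b) (hmemf b hb))
  have hbij : Set.BijOn f (↑Δ' : Set X) (↑Δ : Set Y) := by
    refine ⟨?_, ?_, ?_⟩
    · intro a ha
      exact Finset.mem_coe.mpr (hmemf a (Finset.mem_coe.mp ha))
    · intro a ha b hb hfab
      exact hinj a b (hmemE a (Finset.mem_coe.mp ha)) (hmemE b (Finset.mem_coe.mp hb)) hfab
    · intro z hz
      have hz' : z ∈ Δ := Finset.mem_coe.mp hz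
      exact ⟨g z, Finset.mem_coe.mpr (Finset.mem_image_of_mem g hz'), (hg z hz').2⟩
  refine ⟨Δ', ⟨hxΔ', hpairs, hbij⟩, ?_⟩
  rintro Δ'' ⟨hx'', hpairs'', hbij''⟩
  ext a
  constructor
  · intro ha
    have hxa : (x, a) ∈ E := hpairs'' x hx'' a ha
    have hfa : f a ∈ Δ := Finset.mem_coe.mp (hbij''.mapsTo (Finset.mem_coe.mpr ha))
    have h1 := hg (f a) hfa
    have : g (f a) = a := hinj _ _ h1.1 hxa h1.2
    rw [← this]
    exact Finset.mem_image_of_mem g hfa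
  · intro ha
    obtain ⟨z, hz, rfl⟩ := Finset.mem_image.mp ha
    obtain ⟨b, hb, hfb⟩ := hbij''.surjOn (Finset.mem_coe.mpr hz)
    have hb' : b ∈ Δ'' := Finset.mem_coe.mp hb
    have : g z = b := hinj _ _ (hg z hz).1 (hpairs'' x hx'' b hb')
      (by rw [(hg z hz).2, hfb])
    rw [this]; exact hb'
end

section
/- Let X be a path-connected uniform space and x₀ ∈ X, and let X̃ be the set of homotopy-rel-endpoints classes of paths in X starting at x₀, with the basic uniform structure generated by the sets E* (pairs ([α],[β]) such that α⁻¹∗β is homotopic rel endpoints to a path contained in some ball B(z,E)). Then the endpoint map π_X : X̃ → X generates the uniform structure of X if and only if X is uniformly locally path-connected: for each entourage E of X there is an entourage F such that any two points of B(x,F) can be joined by a path in B(x,E), for every x ∈ X. -/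
open UniformSpace Filter Function
open scoped Uniformity Topology

universe u

variable {X : Type u}

/-- A path lies in the ball `B(z,E)` for some `z ∈ X`. -/
def InBall {X : Type u} [TopologicalSpace X] (E : Set (X × X)) {a b : X} (γ : Path a b) : Prop :=
  ∃ z : X, ∀ t, (z, γ t) ∈ E

/-- The space `X̃` of homotopy-rel-endpoints classes of paths starting at `x₀`. -/
def PTilde (X : Type u) [UniformSpace X] (x₀ : X) : Type u :=
  Σ y : X, Path.Homotopic.Quotient x₀ y

/-- The basic entourage `E*` on `X̃`: pairs `([α],[β])` such that `α⁻¹∗β` is homotopic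
rel endpoints to a path contained in some ball `B(z,E)`. -/
def EstarP [UniformSpace X] (x₀ : X) (E : Set (X × X)) :
    Set (PTilde X x₀ × PTilde X x₀) :=
  { q | ∃ (α : Path x₀ q.1.1) (β : Path x₀ q.2.1) (γ : Path q.1.1 q.2.1),
      q.1.2 = Quotient.mk (Path.Homotopic.setoid x₀ q.1.1) α ∧
      q.2.2 = Quotient.mk (Path.Homotopic.setoid x₀ q.2.1) β ∧
      InBall E γ ∧ (α.symm.trans β).Homotopic γ }

/-- The image under the endpoint map `π_X : X̃ → X` of the entourage `E*`. -/
def piEstarP [UniformSpace X] (x₀ : X) (E : Set (X × X)) : Set (X × X) :=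
  (fun q : PTilde X x₀ × PTilde X x₀ => (q.1.1, q.2.1)) '' EstarP x₀ E


lemma piEstarP_eq [UniformSpace X] [PathConnectedSpace X] (x₀ : X) (E : Set (X × X)) :
    piEstarP x₀ E = {p : X × X | ∃ γ : Path p.1 p.2, InBall E γ} := by
  ext ⟨a, b⟩
  constructor
  · rintro ⟨⟨q1, q2⟩, ⟨α, β, γ, _, _, hγ, _⟩, h⟩
    simp only [Prod.mk.injEq] at h
    obtain ⟨h1, h2⟩ := h
    subst h1; subst h2
    exact ⟨γ, hγ⟩
  · rintro ⟨γ, hγ⟩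
    classical
    set α : Path x₀ a := PathConnectedSpace.somePath x₀ a
    refine ⟨(⟨a, Quotient.mk _ α⟩, ⟨b, Quotient.mk _ (α.trans γ)⟩),
      ⟨α, α.trans γ, γ, rfl, rfl, hγ, ?_⟩, rfl⟩
    refine Path.Homotopic.trans ⟨(Path.Homotopy.transAssoc α.symm α γ).symm⟩ ?_
    refine Path.Homotopic.trans
      (Path.Homotopic.hcomp ⟨(Path.Homotopy.reflSymmTrans α).symm⟩ (Path.Homotopic.refl γ)) ?_
    exact ⟨Path.Homotopy.reflTrans γ⟩

/-- For a path-connected uniform space `X`, the endpoint map `π_X : X̃ → X` generates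
the uniform structure of `X` iff `X` is uniformly locally path-connected. -/
theorem endpoint_generates_iff_uniformly_locally_path_connected
    [UniformSpace X] [PathConnectedSpace X] (x₀ : X) :
    ((∀ S ∈ 𝓤 X, ∃ E ∈ 𝓤 X, piEstarP x₀ E ⊆ S) ∧
        (∀ E ∈ 𝓤 X, piEstarP x₀ E ∈ 𝓤 X)) ↔
      (∀ E ∈ 𝓤 X, ∃ F ∈ 𝓤 X, ∀ x y z : X, (x, y) ∈ F → (x, z) ∈ F →
        ∃ γ : Path y z, ∀ t, (x, γ t) ∈ E) := by
  constructor
  · rintro ⟨-, h2⟩ E hE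
    obtain ⟨V, hV, Vsymm, hVE⟩ := comp_symm_mem_uniformity_sets hE
    refine ⟨piEstarP x₀ V, h2 V hV, ?_⟩
    intro x y z hxy hxz
    rw [piEstarP_eq] at hxy hxz
    obtain ⟨γ₁, w₁, h₁⟩ := hxy
    obtain ⟨γ₂, w₂, h₂⟩ := hxz
    have key : ∀ (w : X) (c d : X) (γ : Path c d), (∀ s, (w, γ s) ∈ V) → γ 0 = x →
        ∀ s, (x, γ s) ∈ E := by
      intro w c d γ hw h0 s
      refine hVE (SetRel.prodMk_mem_comp ?_ (hw s))
      have := hw 0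
      rw [h0] at this
      exact Vsymm.symm _ _ this
    refine ⟨γ₁.symm.trans γ₂, fun t => ?_⟩
    rw [Path.trans_apply]
    split_ifs
    · rw [Path.symm_apply]
      exact key w₁ _ _ γ₁ h₁ γ₁.source _
    · exact key w₂ _ _ γ₂ h₂ γ₂.source _
  · intro h
    constructor
    · intro S hS
      obtain ⟨V, hV, Vsymm, hVS⟩ := comp_symm_mem_uniformity_sets hS
      refine ⟨V, hV, ?_⟩
      rw [piEstarP_eq]
      rintro ⟨a, b⟩ ⟨γ, z, hz⟩
      have h0 := hz 0
      have h1 := hz 1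
      rw [γ.source] at h0
      rw [γ.target] at h1
      exact hVS (SetRel.prodMk_mem_comp (Vsymm.symm _ _ h0) h1)
    · intro E hE
      obtain ⟨F, hF, hULPC⟩ := h E hE
      refine mem_of_superset hF ?_
      rw [piEstarP_eq]
      rintro ⟨a, b⟩ hab
      obtain ⟨γ, hγ⟩ := hULPC a a b (refl_mem_uniformity hF) hab
      exact ⟨γ, a, hγ⟩
end

section
/- If X is a uniformly locally path-connected uniform space, then for every entourage E of X there is an entourage F ⊆ E such that the ball B(x,F) is path-connected for every x ∈ X. -/
open UniformSpace Filter Function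
open scoped Uniformity Topology

universe u

variable {X : Type u}

private lemma path_to_point_aux [UniformSpace X] {E : Set (X × X)} {x y : X}
    (γ : Path x y) (hγ : ∀ t, (x, γ t) ∈ E) (s : unitInterval) :
    ∃ δ : Path x (γ s), ∀ t, (x, δ t) ∈ E := by
  refine ⟨(γ.truncateOfLE s.2.1).cast (γ.extend_zero.symm) (γ.extend_extends' s).symm,
    fun t' ↦ ?_⟩
  dsimp [Path.truncateOfLE, Path.truncate]
  exact γ.extend_extends' ⟨min (max t'.1 0) s.1, by simp [s.2.1, s.2.2]⟩ ▸ hγ _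

/-- If `X` is uniformly locally path-connected, then every entourage `E` contains an
entourage `F` all of whose balls `B(x,F)` are path-connected. -/
theorem balls_path_connected_of_uniformly_locally_path_connected
    [UniformSpace X]
    (h : ∀ E ∈ 𝓤 X, ∃ H ∈ 𝓤 X, ∀ x y z : X, (x, y) ∈ H → (x, z) ∈ H →
        ∃ γ : Path y z, ∀ t, (x, γ t) ∈ E) :
    ∀ E ∈ 𝓤 X, ∃ F ∈ 𝓤 X, F ⊆ E ∧ ∀ x y z : X, (x, y) ∈ F → (x, z) ∈ F →
      ∃ γ : Path y z, ∀ t, (x, γ t) ∈ F := by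
  intro E hE
  obtain ⟨H, hH, hHE⟩ := h E hE
  set F : Set (X × X) := {p : X × X | ∃ γ : Path p.1 p.2, ∀ t, (p.1, γ t) ∈ E} with hF
  have hHF : H ⊆ F := by
    rintro ⟨a, b⟩ hab
    exact hHE a a b (refl_mem_uniformity hH) hab
  refine ⟨F, mem_of_superset hH hHF, ?_, ?_⟩
  · rintro ⟨a, b⟩ ⟨γ, hγ⟩
    have := hγ 1
    rwa [γ.target] at this
  · rintro x y z ⟨γ₁, h1⟩ ⟨γ₂, h2⟩
    refine ⟨γ₁.symm.trans γ₂, fun t ↦ ?_⟩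
    rw [Path.trans_apply]
    have hs1 : ∀ s, ((x, γ₁.symm s) : X × X) ∈ F :=
      fun s ↦ path_to_point_aux γ₁ h1 (unitInterval.symm s)
    split_ifs with ht
    · exact hs1 _
    · exact path_to_point_aux γ₂ h2 _
end

section
/- Let X be a path-connected uniform space with base point x₀ and E an entourage of X. If (E*)² (the relational square of the entourage E* on X̃) is transverse to the endpoint map π_X : X̃ → X, then every loop at x in B(x,E) is null-homotopic in X, for every x ∈ X. -/
open UniformSpace Filter Function
open scoped Uniformity Topology

universe u

variable {X : Type u}

/-- If `(E*)²` is transverse to the endpoint map `π_X : X̃ → X`, then every loop at `x`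
contained in `B(x,E)` is null-homotopic in `X`. -/
theorem loops_null_homotopic_of_transverse
    [UniformSpace X] [PathConnectedSpace X] (x₀ : X)
    (E : Set (X × X)) (hE : E ∈ 𝓤 X)
    (htr : ∀ a b : PTilde X x₀,
      (a, b) ∈ SetRel.comp (EstarP x₀ E) (EstarP x₀ E) → a.1 = b.1 → a = b) :
    ∀ (x : X) (γ : Path x x), (∀ t, (x, γ t) ∈ E) → γ.Homotopic (Path.refl x) := by
  intro x γ hγ
  obtain ⟨α⟩ : Nonempty (Path x₀ x) := ⟨PathConnectedSpace.somePath x₀ x⟩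
  have hxx : (x, x) ∈ E := refl_mem_uniformity hE
  set a : PTilde X x₀ := ⟨x, Quotient.mk (Path.Homotopic.setoid x₀ x) α⟩ with ha
  set b : PTilde X x₀ := ⟨x, Quotient.mk (Path.Homotopic.setoid x₀ x) (α.trans γ)⟩ with hb
  have haa : (a, a) ∈ EstarP x₀ E :=
    ⟨α, α, Path.refl x, rfl, rfl, ⟨x, fun _ => hxx⟩,
      ⟨(Path.Homotopy.reflSymmTrans α).symm⟩⟩
  have hassoc : (α.symm.trans (α.trans γ)).Homotopic ((α.symm.trans α).trans γ) :=
    ⟨(Path.Homotopy.transAssoc α.symm α γ).symm⟩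
  have hmid : ((α.symm.trans α).trans γ).Homotopic γ := by
    refine (Path.Homotopic.hcomp ⟨(Path.Homotopy.reflSymmTrans α).symm⟩
      (Path.Homotopic.refl γ)).trans ⟨Path.Homotopy.reflTrans γ⟩
  have hab : (a, b) ∈ EstarP x₀ E :=
    ⟨α, α.trans γ, γ, rfl, rfl, ⟨x, hγ⟩, hassoc.trans hmid⟩
  have heq : a = b := htr a b (SetRel.prodMk_mem_comp haa hab) rfl
  have h2 : Quotient.mk (Path.Homotopic.setoid x₀ x) α
      = Quotient.mk (Path.Homotopic.setoid x₀ x) (α.trans γ) := by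
    exact eq_of_heq (Sigma.ext_iff.mp heq).2
  have hαγ : α.Homotopic (α.trans γ) := Quotient.exact h2
  have h3 : (α.symm.trans α).Homotopic (α.symm.trans (α.trans γ)) :=
    Path.Homotopic.hcomp (Path.Homotopic.refl α.symm) hαγ
  have h4 : (Path.refl x).Homotopic γ :=
    Path.Homotopic.trans ⟨Path.Homotopy.reflSymmTrans α⟩
      (h3.trans (hassoc.trans hmid))
  exact h4.symm
end

section
/- Let (G_n)_{n∈ℕ} be an inverse sequence of countable groups with bonding maps p_n : G_{n+1} → G_n. If lim¹ of the sequence vanishes — that is, for every sequence (g_n) with g_n ∈ G_n there exists (h_n) with h_n ∈ G_n such that g_n = h_n · p_n(h_{n+1})⁻¹ for all n — then the sequence satisfies the Mittag-Leffler condition. -/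
universe u

variable (G : ℕ → Type u) [∀ n, Group (G n)]

/-- The composite bonding homomorphism `G m →* G n` for `n ≤ m`. -/
def bond (p : ∀ n, G (n + 1) →* G n) : ∀ {n m : ℕ}, n ≤ m → (G m →* G n) :=
  fun {n _} h =>
    Nat.leRecOn h (fun {k} (φ : G k →* G n) => φ.comp (p k)) (MonoidHom.id (G n))

theorem bond_self (p : ∀ n, G (n + 1) →* G n) (n : ℕ) :
    bond G p (le_refl n) = MonoidHom.id (G n) := Nat.leRecOn_self _

theorem bond_succ (p : ∀ n, G (n + 1) →* G n) {n m : ℕ} (h : n ≤ m) :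
    bond G p (h.trans (Nat.le_succ m)) = (bond G p h).comp (p m) := Nat.leRecOn_succ h _

theorem bond_comp (p : ∀ n, G (n + 1) →* G n) {n m k : ℕ} (h1 : n ≤ m) (h2 : m ≤ k) :
    bond G p (h1.trans h2) = (bond G p h1).comp (bond G p h2) := by
  induction k, h2 using Nat.le_induction with
  | base => rw [show (bond G p (le_refl m)) = MonoidHom.id (G m) from bond_self G p m]; rfl
  | succ k h2 ih =>
    rw [show bond G p (h1.trans (h2.trans (Nat.le_succ k))) = (bond G p (h1.trans h2)).comp (p k)
        from bond_succ G p (h1.trans h2), ih,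
      show bond G p (h2.trans (Nat.le_succ k)) = (bond G p h2).comp (p k) from bond_succ G p h2]
    rfl

noncomputable section Aux
open scoped Classical
variable (p : ∀ n, G (n + 1) →* G n) (n : ℕ)

def Qh (m : ℕ) : G m →* G n := if h : n ≤ m then bond G p h else 1

def Ig (m : ℕ) : Subgroup (G n) := (Qh G p n m).range

theorem Qh_eq {m : ℕ} (h : n ≤ m) : Qh G p n m = bond G p h := dif_pos h

theorem Qh_self : Qh G p n n = MonoidHom.id (G n) := by
  rw [Qh_eq G p n (le_refl n), bond_self]

theorem Qh_succ {m : ℕ} (h : n ≤ m) : Qh G p n (m+1) = (Qh G p n m).comp (p m) := by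
  rw [Qh_eq G p n (h.trans (Nat.le_succ m)), Qh_eq G p n h, bond_succ]

theorem Ig_mono {m k : ℕ} (h1 : n ≤ m) (h2 : m ≤ k) : Ig G p n k ≤ Ig G p n m := by
  rintro y ⟨z, rfl⟩
  rw [Qh_eq G p n (h1.trans h2), bond_comp G p h1 h2]
  exact ⟨bond G p h2 z, by rw [Qh_eq G p n h1]; rfl⟩

def nextk (m : ℕ) : ℕ :=
  if h : ∃ k, m + 1 ≤ k ∧ Ig G p n k ≠ Ig G p n (m+1) then h.choose else m + 2

theorem nextk_spec {m : ℕ}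
    (hne : ∃ k, m + 1 ≤ k ∧ Ig G p n k ≠ Ig G p n (m+1)) :
    m + 2 ≤ nextk G p n m ∧ Ig G p n (nextk G p n m) ≠ Ig G p n (m+1) := by
  rw [nextk, dif_pos hne]
  obtain ⟨h1, h2⟩ := hne.choose_spec
  refine ⟨?_, h2⟩
  rcases h1.lt_or_eq with h | h
  · omega
  · exact absurd (show Ig G p n hne.choose = Ig G p n (m+1) by rw [← h]) h2

def pickz (m : ℕ) (a : G n) : G (m + 1) :=
  if a ∈ Ig G p n (nextk G p n m) then
    (if h : ∃ z : G (m+1), Qh G p n (m+1) z ∉ Ig G p n (nextk G p n m) then h.choose else 1)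
  else 1

variable (x : ℕ → G n)

def St : ℕ → ℕ × G n
  | 0 => (n, 1)
  | j + 1 => (nextk G p n (St j).1 - 1,
      (St j).2 * Qh G p n ((St j).1 + 1) (pickz G p n (St j).1 ((x j)⁻¹ * (St j).2)))

def zf (j : ℕ) : G ((St G p n x j).1 + 1) :=
  pickz G p n (St G p n x j).1 ((x j)⁻¹ * (St G p n x j).2)

def gseq (t : ℕ) : G t :=
  if h : ∃ j, (St G p n x j).1 + 1 = t then
    cast (congrArg G h.choose_spec) (zf G p n x h.choose) else 1

def Sfold (g : ∀ t, G t) : ℕ → G n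
  | 0 => 1
  | d + 1 => Sfold g d * Qh G p n (n + d) (g (n + d))

section Lemmas
variable (hne : ∀ m, n ≤ m → ∃ k, m ≤ k ∧ Ig G p n k ≠ Ig G p n m)
include hne

theorem St_ge (j : ℕ) : n ≤ (St G p n x j).1 := by
  induction j with
  | zero => exact le_refl n
  | succ j ih =>
    have hk := nextk_spec G p n (hne ((St G p n x j).1 + 1) (by omega))
    show n ≤ nextk G p n (St G p n x j).1 - 1
    omega

theorem St_lt (j : ℕ) : (St G p n x j).1 < (St G p n x (j+1)).1 := by
  have hk := nextk_spec G p n (hne ((St G p n x j).1 + 1) (by have := St_ge G p n x hne j; omega))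
  show (St G p n x j).1 < nextk G p n (St G p n x j).1 - 1
  omega

theorem St_mono : StrictMono (fun j => (St G p n x j).1) :=
  strictMono_nat_of_lt_succ (St_lt G p n x hne)

theorem St_key (j : ℕ) :
    (x j)⁻¹ * (St G p n x (j+1)).2 ∉ Ig G p n ((St G p n x (j+1)).1 + 1) := by
  have hm : n ≤ (St G p n x j).1 := St_ge G p n x hne j
  set m := (St G p n x j).1 with hmdef
  have hk := nextk_spec G p n (hne (m + 1) (by omega))
  set K := nextk G p n m with hKdef
  have hSt1 : (St G p n x (j+1)).1 = K - 1 := rfl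
  have hSt2 : (St G p n x (j+1)).2
      = (St G p n x j).2 * Qh G p n (m+1) (pickz G p n m ((x j)⁻¹ * (St G p n x j).2)) := rfl
  have hK1 : (St G p n x (j+1)).1 + 1 = K := by omega
  rw [hK1, hSt2, ← mul_assoc]
  set a := (x j)⁻¹ * (St G p n x j).2 with hadef
  by_cases ha : a ∈ Ig G p n K
  · rw [pickz, if_pos ha]
    have hex : ∃ z : G (m+1), Qh G p n (m+1) z ∉ Ig G p n K := by
      have hle : Ig G p n K ≤ Ig G p n (m+1) := Ig_mono G p n (by omega) (by omega)
      have hnle : ¬ Ig G p n (m+1) ≤ Ig G p n K := fun hle2 => hk.2 (le_antisymm hle hle2)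
      obtain ⟨y, hy1, hy2⟩ := SetLike.not_le_iff_exists.mp hnle
      obtain ⟨z, rfl⟩ := hy1
      exact ⟨z, hy2⟩
    rw [dif_pos hex]
    intro hmem
    exact hex.choose_spec (by
      have := (Ig G p n K).mul_mem (inv_mem ha) hmem
      rwa [inv_mul_cancel_left] at this)
  · rw [pickz, if_neg ha, map_one, mul_one]
    exact ha

omit hne in theorem gseq_one (t : ℕ) (h : ∀ j, (St G p n x j).1 + 1 ≠ t) : gseq G p n x t = 1 := by
  rw [gseq, dif_neg (by push_neg; exact h)]

theorem gseq_at (j : ℕ) : gseq G p n x ((St G p n x j).1 + 1) = zf G p n x j := by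
  have hex : ∃ i, (St G p n x i).1 + 1 = (St G p n x j).1 + 1 := ⟨j, rfl⟩
  rw [gseq, dif_pos hex]
  have h3 : hex.choose = j := by
    have := hex.choose_spec
    exact (St_mono G p n x hne).injective (by omega)
  exact eq_of_heq ((cast_heq _ _).trans (by rw [h3]))

omit hne in theorem tele (g h : ∀ t, G t) (hg : ∀ t, g t = h t * (p t (h (t+1)))⁻¹) (d : ℕ) :
    h n * (Qh G p n (n+d) (h (n+d)))⁻¹ = Sfold G p n g d := by
  induction d with
  | zero =>
    show h n * (Qh G p n n (h n))⁻¹ = 1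
    rw [Qh_self]; simp
  | succ d ih =>
    have e : Qh G p n (n+d+1) (h (n+d+1))
        = (Qh G p n (n+d) (g (n+d)))⁻¹ * Qh G p n (n+d) (h (n+d)) := by
      rw [Qh_succ G p n (Nat.le_add_right n d)]
      show Qh G p n (n+d) (p (n+d) (h (n+d+1))) = _
      have e2 : p (n+d) (h (n+d+1)) = (g (n+d))⁻¹ * h (n+d) := by
        rw [hg (n+d)]; group
      rw [e2, map_mul, map_inv]
    show h n * (Qh G p n (n+d+1) (h (n+d+1)))⁻¹ = Sfold G p n g d * Qh G p n (n+d) (g (n+d))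
    rw [e, ← ih]; group

omit hne in theorem Sfold_step (g : ∀ t, G t) (d c : ℕ) (hc : 1 ≤ c)
    (h1 : ∀ e, d < e → e < d + c → g (n+e) = 1) :
    Sfold G p n g (d+c) = Sfold G p n g d * Qh G p n (n+d) (g (n+d)) := by
  induction c, hc using Nat.le_induction with
  | base => rfl
  | succ c hc ih =>
    show Sfold G p n g (d+c) * Qh G p n (n+(d+c)) (g (n+(d+c))) = _
    rw [h1 (d+c) (by omega) (by omega), map_one, mul_one,
      ih (fun e he1 he2 => h1 e he1 (by omega))]

end Lemmas
end Aux


/-- For an inverse sequence of countable groups, vanishing of `lim¹` (solvability of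
the twisted cocycle equations) implies the Mittag-Leffler condition. -/
theorem mittag_leffler_of_lim1_vanishing [∀ n, Countable (G n)]
    (p : ∀ n, G (n + 1) →* G n)
    (hlim1 : ∀ g : ∀ n, G n, ∃ h : ∀ n, G n, ∀ n, g n = h n * (p n (h (n + 1)))⁻¹) :
    ∀ n : ℕ, ∃ m : ℕ, ∃ hm : n ≤ m, ∀ k : ℕ, ∀ hk : m ≤ k,
      (bond G p (hm.trans hk)).range = (bond G p hm).range := by
  intro n
  by_contra hcon
  push_neg at hcon
  have hne : ∀ m, n ≤ m → ∃ k, m ≤ k ∧ Ig G p n k ≠ Ig G p n m := by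
    intro m hm
    obtain ⟨k, hk, hnk⟩ := hcon m hm
    exact ⟨k, hk, by rwa [Ig, Ig, Qh_eq G p n (hm.trans hk), Qh_eq G p n hm]⟩
  obtain ⟨x, hx⟩ := exists_surjective_nat (G n)
  set g := gseq G p n x with hgdef
  obtain ⟨h, hh⟩ := hlim1 g
  have hge : ∀ j, n ≤ (St G p n x j).1 := St_ge G p n x hne
  have hmono : StrictMono (fun j => (St G p n x j).1) := St_mono G p n x hne
  -- Claim B : the accumulated products agree with the true partial products of g
  have hB : ∀ j, Sfold G p n g ((St G p n x j).1 + 1 - n) = (St G p n x j).2 := by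
    intro j
    induction j with
    | zero =>
      have hgn : g n = 1 := gseq_one G p n x n (fun i => by have := hge i; omega)
      show Sfold G p n g (n + 1 - n) = 1
      rw [show n + 1 - n = 1 by omega]
      show (1 : G n) * Qh G p n (n+0) (g (n+0)) = 1
      rw [show g (n+0) = 1 from hgn, map_one, mul_one]
    | succ j ih =>
      have hm : n ≤ (St G p n x j).1 := hge j
      set m := (St G p n x j).1 with hmdef
      set m' := (St G p n x (j+1)).1 with hm'def
      have hmm' : m < m' := hmono (by omega : j < j + 1)
      have hgap : ∀ e, (m+1-n) < e → e < (m+1-n) + (m'-m) → g (n+e) = 1 := by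
        intro e he1 he2
        refine gseq_one G p n x (n+e) (fun i hi => ?_)
        have hi' : (St G p n x i).1 = n + e - 1 := by omega
        rcases lt_trichotomy i (j+1) with hij | hij | hij
        · have : (St G p n x i).1 ≤ m := by
            have := hmono.monotone (by omega : i ≤ j); omega
          omega
        · subst hij; omega
        · have : m' ≤ (St G p n x i).1 := hmono.monotone (by omega)
          omega
      have hstep := Sfold_step G p n g (m+1-n) (m'-m) (by omega) hgap
      rw [show (m+1-n) + (m'-m) = m' + 1 - n by omega] at hstep
      have hnd : n + (m+1-n) = m+1 := by omega
      show Sfold G p n g (m' + 1 - n) = (St G p n x (j+1)).2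
      rw [hstep]
      have hQ : Qh G p n (n+(m+1-n)) (g (n+(m+1-n))) = Qh G p n (m+1) (g (m+1)) := by
        congr 1 <;> rw [hnd]
      rw [hQ, ih]
      have hgm : g (m+1) = zf G p n x j := gseq_at G p n x hne j
      rw [hgm]
      rfl
  -- conclude
  obtain ⟨j, hj⟩ := hx (h n)
  have hkey := St_key G p n x hne j
  set d := (St G p n x (j+1)).1 + 1 - n with hddef
  have hnd : n + d = (St G p n x (j+1)).1 + 1 := by have := hge (j+1); omega
  have htel := tele G p n g h hh d
  have hmem : (h n)⁻¹ * Sfold G p n g d ∈ Ig G p n (n+d) := by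
    rw [← htel, ← mul_assoc, inv_mul_cancel, one_mul]
    exact (Ig G p n (n+d)).inv_mem ⟨h (n+d), rfl⟩
  rw [hnd] at hmem
  rw [show Sfold G p n g d = (St G p n x (j+1)).2 from hB (j+1)] at hmem
  rw [hj] at hkey
  exact hkey hmem
end

section
/- If X is a uniformly joinable uniform space, then for every entourage E of X there is an entourage F such that the image of π₁(R(X,F), x) → π₁(R(X,E), x) is contained in the image of the natural map from the uniform fundamental group π̌₁(X,x) (the inverse limit of {π₁(R(X,H),x)}_H) to π₁(R(X,E),x), for every x ∈ X; i.e. the uniform fundamental pro-group of X satisfies the strong Mittag-Leffler condition. -/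
open UniformSpace Filter Function
open scoped Uniformity

universe u v

variable {X : Type u} {Y : Type v}

/-- Homotopy rel endpoints of edge-paths in the Rips complex `R(X,E)`. -/
inductive RipsHtpy (E : Set (X × X)) : List X → List X → Prop
  | refl (l : List X) : RipsHtpy E l l
  | symm {l₁ l₂ : List X} : RipsHtpy E l₁ l₂ → RipsHtpy E l₂ l₁
  | trans {l₁ l₂ l₃ : List X} : RipsHtpy E l₁ l₂ → RipsHtpy E l₂ l₃ → RipsHtpy E l₁ l₃
  | ins (l₁ l₂ : List X) (a v b : X) :
      (a, v) ∈ E → (v, b) ∈ E → (a, b) ∈ E →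
      RipsHtpy E (l₁ ++ a :: b :: l₂) (l₁ ++ a :: v :: b :: l₂)

/-- `E`-homotopy of chains (endpoints may move within `E`). -/
def EHomotopic (E : Set (X × X)) (c d : List X) : Prop :=
  ∃ xc xd yc yd : X, c.head? = some xc ∧ d.head? = some xd ∧
    c.getLast? = some yc ∧ d.getLast? = some yd ∧
    (xc, xd) ∈ E ∧ (yc, yd) ∈ E ∧
    RipsHtpy E c (xc :: (d ++ [yc]))

/-- A generalized (uniform) path from `x` to `y`. -/
structure GenPath (X : Type u) [UniformSpace X] (x y : X) where
  c : Set (X × X) → List X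
  chain : ∀ E ∈ 𝓤 X, IsEChain E (c E)
  head : ∀ E ∈ 𝓤 X, (c E).head? = some x
  last : ∀ E ∈ 𝓤 X, (c E).getLast? = some y
  compat : ∀ E ∈ 𝓤 X, ∀ F ∈ 𝓤 X, F ⊆ E → RipsHtpy E (c F) (c E)

/-- A generalized path is `E`-short if its `E`-term is the edge `e(x,y)`. -/
def GenPath.EShort [UniformSpace X] {x y : X} (p : GenPath X x y) (E : Set (X × X)) : Prop :=
  (x, y) ∈ E ∧ RipsHtpy E (p.c E) [x, y]

/-- `X` is joinable: any two points are joined by a generalized path. -/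
def Joinable (X : Type u) [UniformSpace X] : Prop :=
  ∀ x y : X, Nonempty (GenPath X x y)

/-- `X` is uniformly joinable. -/
def UniformlyJoinable (X : Type u) [UniformSpace X] : Prop :=
  ∀ E ∈ 𝓤 X, ∃ F ∈ 𝓤 X, ∀ x y : X, (x, y) ∈ F → ∃ p : GenPath X x y, p.EShort E

/-- `X` is chain connected. -/
def ChainConnected (X : Type u) [UniformSpace X] : Prop :=
  ∀ E ∈ 𝓤 X, ∀ x y : X, ∃ l : List X,
    IsEChain E l ∧ l.head? = some x ∧ l.getLast? = some y

/-- `f` generates the uniform structure of `Y`. -/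
def GeneratesUS [UniformSpace X] [UniformSpace Y] (f : X → Y) : Prop :=
  (∀ S ∈ 𝓤 Y, ∃ E ∈ 𝓤 X, fimg f E ⊆ S) ∧ ∀ E ∈ 𝓤 X, fimg f E ∈ 𝓤 Y

theorem RipsHtpy.map {E : Set (X × X)} {E' : Set (Y × Y)} (f : X → Y)
    (h : ∀ a b : X, (a, b) ∈ E → (f a, f b) ∈ E') :
    ∀ {l₁ l₂ : List X}, RipsHtpy E l₁ l₂ → RipsHtpy E' (l₁.map f) (l₂.map f) := by
  intro l₁ l₂ H
  induction H with
  | refl l => exact .refl _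
  | symm _ ih => exact .symm ih
  | trans _ _ ih₁ ih₂ => exact .trans ih₁ ih₂
  | ins l₁ l₂ a v b h₁ h₂ h₃ =>
      simpa using RipsHtpy.ins (l₁.map f) (l₂.map f) (f a) (f v) (f b)
        (h a v h₁) (h v b h₂) (h a b h₃)

theorem GeneratesUS.preimage [UniformSpace X] [UniformSpace Y] {f : X → Y}
    (hf : GeneratesUS f) : ∀ S ∈ 𝓤 Y, Prod.map f f ⁻¹' S ∈ 𝓤 X := by
  intro S hS
  obtain ⟨E, hE, hES⟩ := hf.1 S hS
  exact Filter.mem_of_superset hE fun p hp => hES ⟨p, hp, rfl⟩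

/-- The pushforward of a generalized path along a map inducing the uniformity. -/
def GenPath.map [UniformSpace X] [UniformSpace Y] (f : X → Y)
    (hf : ∀ S ∈ 𝓤 Y, Prod.map f f ⁻¹' S ∈ 𝓤 X) {x y : X} (p : GenPath X x y) :
    GenPath Y (f x) (f y) where
  c := fun F => (p.c (Prod.map f f ⁻¹' F)).map f
  chain := fun F hF => List.isChain_map_of_isChain f (fun a b hab => hab) (p.chain _ (hf F hF))
  head := fun F hF => by
    rw [List.head?_map, p.head _ (hf F hF)]; rfl
  last := fun F hF => by
    rw [List.getLast?_map, p.last _ (hf F hF)]; rfl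
  compat := fun E hE F hF hFE =>
    RipsHtpy.map f (fun a b hab => hab)
      (p.compat _ (hf E hE) _ (hf F hF) (Set.preimage_mono hFE))

/-- The space of generalized paths starting at `x₀`. -/
def GPSpace (X : Type u) [UniformSpace X] (x₀ : X) := Σ y : X, GenPath X x₀ y

/-- The endpoint projection. -/
def GPSpace.endpoint [UniformSpace X] {x₀ : X} (c : GPSpace X x₀) : X := c.1

/-- The basic entourage `E*` on `GP(X,x₀)`. -/
def EstarGP [UniformSpace X] (x₀ : X) (E : Set (X × X)) :
    Set (GPSpace X x₀ × GPSpace X x₀) :=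
  { q | EHomotopic E (q.1.2.c E) (q.2.2.c E) }

/-- The induced map on spaces of generalized paths. -/
def gpMap [UniformSpace X] [UniformSpace Y] (f : X → Y)
    (hf : ∀ S ∈ 𝓤 Y, Prod.map f f ⁻¹' S ∈ 𝓤 X) (x₀ : X) :
    GPSpace X x₀ → GPSpace Y (f x₀) :=
  fun c => ⟨f c.1, c.2.map f hf⟩

theorem RipsHtpy.append_left {E : Set (X × X)} (m : List X) :
    ∀ {l₁ l₂ : List X}, RipsHtpy E l₁ l₂ → RipsHtpy E (m ++ l₁) (m ++ l₂) := by
  intro l₁ l₂ H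
  induction H with
  | refl l => exact .refl _
  | symm _ ih => exact .symm ih
  | trans _ _ ih₁ ih₂ => exact .trans ih₁ ih₂
  | ins l₁ l₂ a v b h₁ h₂ h₃ =>
      have := RipsHtpy.ins (m ++ l₁) l₂ a v b h₁ h₂ h₃
      simpa [List.append_assoc] using this

theorem RipsHtpy.append_right {E : Set (X × X)} (m : List X) :
    ∀ {l₁ l₂ : List X}, RipsHtpy E l₁ l₂ → RipsHtpy E (l₁ ++ m) (l₂ ++ m) := by
  intro l₁ l₂ H
  induction H with
  | refl l => exact .refl _
  | symm _ ih => exact .symm ih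
  | trans _ _ ih₁ ih₂ => exact .trans ih₁ ih₂
  | ins l₁ l₂ a v b h₁ h₂ h₃ =>
      have := RipsHtpy.ins l₁ (l₂ ++ m) a v b h₁ h₂ h₃
      simpa [List.append_assoc] using this

theorem RipsHtpy.append_congr {E : Set (X × X)} {l₁ l₂ m₁ m₂ : List X}
    (h : RipsHtpy E l₁ l₂) (h' : RipsHtpy E m₁ m₂) :
    RipsHtpy E (l₁ ++ m₁) (l₂ ++ m₂) :=
  .trans (RipsHtpy.append_right m₁ h) (RipsHtpy.append_left l₂ h')

/-- The constant generalized path. -/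
def GenPath.const (X : Type u) [UniformSpace X] (x : X) : GenPath X x x where
  c := fun _ => [x]
  chain := fun _ _ => List.isChain_singleton x
  head := fun _ _ => rfl
  last := fun _ _ => rfl
  compat := fun _ _ _ _ _ => .refl _

theorem GenPath.c_ne_nil [UniformSpace X] {x y : X} (p : GenPath X x y)
    {E : Set (X × X)} (hE : E ∈ 𝓤 X) : p.c E ≠ [] := by
  intro h
  have := p.head E hE
  rw [h] at this
  simp at this

/-- Concatenation of generalized paths. -/
def GenPath.trans [UniformSpace X] {x y z : X} (p : GenPath X x y) (q : GenPath X y z) :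
    GenPath X x z where
  c := fun E => p.c E ++ q.c E
  chain := fun E hE => by
    rw [IsEChain, List.Chain', List.isChain_append]
    refine ⟨p.chain E hE, q.chain E hE, ?_⟩
    intro a ha b hb
    rw [p.last E hE] at ha
    rw [q.head E hE] at hb
    cases ha; cases hb
    exact refl_mem_uniformity hE
  head := fun E hE => by
    obtain ⟨t, ht⟩ : ∃ t, p.c E = x :: t := by
      cases h : p.c E with
      | nil => exact absurd h (p.c_ne_nil hE)
      | cons a t =>
          have := p.head E hE
          rw [h] at this
          cases this
          exact ⟨t, rfl⟩
    simp [ht]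
  last := fun E hE => by
    rw [List.getLast?_append_of_ne_nil _ (q.c_ne_nil hE)]
    exact q.last E hE
  compat := fun E hE F hF hFE =>
    RipsHtpy.append_congr (p.compat E hE F hF hFE) (q.compat E hE F hF hFE)

/-- If `X` is uniformly joinable then its uniform fundamental pro-group satisfies the
strong Mittag-Leffler condition at every point: the image of `π₁(R(X,F)) → π₁(R(X,E))`
is contained in the image of the uniform fundamental group `π̌₁(X,x)` (the inverse
limit, i.e. generalized loops) in `π₁(R(X,E))`. -/
theorem strong_ML_of_uniformly_joinable [UniformSpace X]
    (huj : UniformlyJoinable X) :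
    ∀ x : X, ∀ E ∈ 𝓤 X, ∃ F ∈ 𝓤 X, F ⊆ E ∧
      ∀ l : List X, IsEChain F l → l.head? = some x → l.getLast? = some x →
        ∃ g : GenPath X x x, RipsHtpy E (g.c E) l := by
  intro x E hE
  obtain ⟨F₀, hF₀, hjoin⟩ := huj E hE
  refine ⟨F₀ ∩ E, Filter.inter_mem hF₀ hE, Set.inter_subset_right, ?_⟩
  set F := F₀ ∩ E with hFdef
  have key : ∀ l : List X, IsEChain F l → ∀ a b : X, l.head? = some a →
      l.getLast? = some b → ∃ g : GenPath X a b, RipsHtpy E (g.c E) l := by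
    intro l
    induction l with
    | nil => intro _ a b h _; exact absurd h (by simp)
    | cons a₀ tl ih =>
        intro hchain a b hhead hlast
        cases hhead
        cases tl with
        | nil =>
            simp only [List.getLast?_singleton, Option.some.injEq] at hlast
            cases hlast
            exact ⟨GenPath.const X a₀, .refl _⟩
        | cons a₁ rest =>
            unfold IsEChain at hchain
            rw [List.Chain', List.isChain_cons_cons] at hchain
            obtain ⟨hab, hchain'⟩ := hchain
            have hlast' : (a₁ :: rest).getLast? = some b := by
              rwa [List.getLast?_cons_cons] at hlast
            obtain ⟨g', hg'⟩ := ih hchain' a₁ b rfl hlast'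
            obtain ⟨p, hpE, hphtpy⟩ := hjoin a₀ a₁ hab.1
            refine ⟨p.trans g', ?_⟩
            have h1 : RipsHtpy E ((p.trans g').c E) ([a₀, a₁] ++ a₁ :: rest) :=
              RipsHtpy.append_congr hphtpy hg'
            refine h1.trans ?_
            have haa₁E : (a₀, a₁) ∈ E := hab.2
            have ha₁a₁ : (a₁, a₁) ∈ E := refl_mem_uniformity hE
            cases rest with
            | nil =>
                have := (RipsHtpy.ins (E := E) [] [] a₀ a₁ a₁ haa₁E ha₁a₁ haa₁E).symm
                simpa using this
            | cons r rs =>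
                have hr : (a₁, r) ∈ E := by
                  exact (List.isChain_cons_cons.mp hchain').1.2
                have := (RipsHtpy.ins (E := E) [a₀] rs a₁ a₁ r ha₁a₁ hr hr).symm
                simpa using this
  intro l hl hh hlast
  exact key l hl x x hh hlast
end

section
/- Let X be a joinable uniform space with base point x₀. If the uniform fundamental pro-group {π₁(R(X,E),x₀)}_E satisfies the strong Mittag-Leffler condition, then X is uniformly joinable: for each entourage E there is an entourage F such that every pair (x,y) ∈ F can be joined by an E-short generalized path. -/
open UniformSpace Filter Function
open scoped Uniformity

universe u v

variable {X : Type u} {Y : Type v}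

/-! ### Auxiliary lemmas for the main theorem -/

theorem RipsHtpy.mono {E E' : Set (X × X)} (h : E ⊆ E') {l₁ l₂ : List X}
    (H : RipsHtpy E l₁ l₂) : RipsHtpy E' l₁ l₂ := by
  have := RipsHtpy.map (E' := E') id (fun a b hab => h hab) H
  simpa using this

theorem RipsHtpy.rev {E : Set (X × X)} (hsymm : ∀ a b : X, (a, b) ∈ E → (b, a) ∈ E)
    {l₁ l₂ : List X} (H : RipsHtpy E l₁ l₂) : RipsHtpy E l₁.reverse l₂.reverse := by
  induction H with
  | refl l => exact .refl _
  | symm _ ih => exact .symm ih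
  | trans _ _ ih₁ ih₂ => exact .trans ih₁ ih₂
  | ins m₁ m₂ a v b h₁ h₂ h₃ =>
      have := RipsHtpy.ins m₂.reverse m₁.reverse b v a
        (hsymm _ _ h₂) (hsymm _ _ h₁) (hsymm _ _ h₃)
      simpa [List.reverse_append, List.append_assoc] using this

theorem RipsHtpy.congrAux {E : Set (X × X)} (pre suf : List X) {l₁ l₂ : List X}
    (H : RipsHtpy E l₁ l₂) : RipsHtpy E (pre ++ l₁ ++ suf) (pre ++ l₂ ++ suf) := by
  induction H with
  | refl l => exact .refl _
  | symm _ ih => exact .symm ih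
  | trans _ _ ih₁ ih₂ => exact .trans ih₁ ih₂
  | ins m₁ m₂ a v b h₁ h₂ h₃ =>
      have := RipsHtpy.ins (pre ++ m₁) (m₂ ++ suf) a v b h₁ h₂ h₃
      simpa [List.append_assoc] using this

theorem List.ne_nil_of_head?_eq_some' {l : List X} {a : X} (h : l.head? = some a) :
    l ≠ [] := by
  intro hl; subst hl; simp at h

/-- Collapsing a chain followed by its reverse: `c.reverse ++ c ≃ [t, t]`. -/
theorem RipsHtpy.collapse {S : Set (X × X)} (hsym : ∀ a b : X, (a, b) ∈ S → (b, a) ∈ S)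
    (hrefl : ∀ a : X, (a, a) ∈ S) :
    ∀ (c : List X), IsEChain S c → ∀ t : X, c.getLast? = some t →
      RipsHtpy S (c.reverse ++ c) [t, t] := by
  intro c
  induction c with
  | nil => intro _ t ht; simp at ht
  | cons a r ih =>
    cases r with
    | nil =>
        intro _ t ht
        simp only [List.getLast?_singleton, Option.some.injEq] at ht
        subst ht
        exact .refl _
    | cons b tl =>
        intro hchain t ht
        rw [IsEChain, List.Chain', List.isChain_cons_cons] at hchain
        obtain ⟨hab, hchain'⟩ := hchain
        rw [List.getLast?_cons_cons] at ht
        have step1 : RipsHtpy S ((a :: b :: tl).reverse ++ a :: b :: tl)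
            ((b :: tl).reverse ++ a :: b :: tl) := by
          have := RipsHtpy.ins (X := X) (b :: tl).reverse tl a a b
            (hrefl a) hab hab
          refine .symm ?_
          simpa [List.append_assoc] using this
        have step2 : RipsHtpy S ((b :: tl).reverse ++ a :: b :: tl)
            ((b :: tl).reverse ++ b :: tl) := by
          have := RipsHtpy.ins (X := X) tl.reverse tl b a b
            (hsym _ _ hab) hab (hrefl b)
          refine .symm ?_
          simpa [List.append_assoc] using this
        exact (step1.trans step2).trans (ih hchain' t ht)

/-- Reversal of a generalized path. -/
def GenPath.rev' [UniformSpace X] {x y : X} (p : GenPath X x y) : GenPath X y x where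
  c := fun G => (p.c (SetRel.symmetrize G)).reverse
  chain := fun G hG => by
    rw [IsEChain, List.Chain', List.isChain_reverse]
    exact (p.chain _ (symmetrize_mem_uniformity hG)).imp fun a b h => h.2
  head := fun G hG => by
    rw [List.head?_reverse, p.last _ (symmetrize_mem_uniformity hG)]
  last := fun G hG => by
    rw [List.getLast?_reverse, p.head _ (symmetrize_mem_uniformity hG)]
  compat := fun E hE F hF hFE => by
    have hsub : SetRel.symmetrize F ⊆ SetRel.symmetrize E := by
      intro z hz
      exact ⟨hFE hz.1, hFE hz.2⟩
    have h := p.compat _ (symmetrize_mem_uniformity hE) _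
      (symmetrize_mem_uniformity hF) hsub
    have hsymm : ∀ a b : X, (a, b) ∈ SetRel.symmetrize E → (b, a) ∈ SetRel.symmetrize E := by
      intro a b hab
      exact ⟨hab.2, hab.1⟩
    exact (h.rev hsymm).mono (SetRel.symmetrize_subset_self (R := E))

/-- Concatenation of generalized paths. -/
def GenPath.concat [UniformSpace X] {x y z : X} (p : GenPath X x y)
    (q : GenPath X y z) : GenPath X x z where
  c := fun G => p.c G ++ q.c G
  chain := fun G hG => by
    refine List.IsChain.append (p.chain G hG) (q.chain G hG) ?_
    intro a ha b hb
    rw [p.last G hG, Option.mem_def, Option.some.injEq] at ha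
    rw [q.head G hG, Option.mem_def, Option.some.injEq] at hb
    subst ha; subst hb
    exact refl_mem_uniformity hG
  head := fun G hG => by
    rw [List.head?_append_of_ne_nil _ (List.ne_nil_of_head?_eq_some' (p.head G hG))]
    exact p.head G hG
  last := fun G hG => by
    rw [List.getLast?_append_of_ne_nil _
      (List.ne_nil_of_head?_eq_some' (q.head G hG))]
    exact q.last G hG
  compat := fun E hE F hF hFE => by
    have h₁ := (p.compat E hE F hF hFE).congrAux [] (q.c F)
    have h₂ := (q.compat E hE F hF hFE).congrAux (p.c E) []
    simp only [List.nil_append, List.append_nil] at h₁ h₂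
    exact h₁.trans h₂

/-- If `X` is joinable and its uniform fundamental pro-group satisfies the strong
Mittag-Leffler condition at `x₀`, then `X` is uniformly joinable. -/
theorem uniformly_joinable_of_strong_ML [UniformSpace X] (x₀ : X)
    (hjoin : Joinable X)
    (hsml : ∀ E ∈ 𝓤 X, ∃ F ∈ 𝓤 X, F ⊆ E ∧
      ∀ l : List X, IsEChain F l → l.head? = some x₀ → l.getLast? = some x₀ →
        ∃ g : GenPath X x₀ x₀, RipsHtpy E (g.c E) l) :
    UniformlyJoinable X := by
  intro E hE
  have hSmem : SetRel.symmetrize E ∈ 𝓤 X := symmetrize_mem_uniformity hE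
  set S := SetRel.symmetrize E with hSdef
  have hSE : S ⊆ E := SetRel.symmetrize_subset_self (R := E)
  have hSsym : ∀ a b : X, (a, b) ∈ S → (b, a) ∈ S := by
    intro a b h; exact ⟨h.2, h.1⟩
  obtain ⟨F, hF, hFS, hML⟩ := hsml S hSmem
  have hF'mem : SetRel.symmetrize F ∈ 𝓤 X := symmetrize_mem_uniformity hF
  refine ⟨SetRel.symmetrize F, hF'mem, ?_⟩
  intro x y hxy
  set F' := SetRel.symmetrize F with hF'def
  have hF'F : F' ⊆ F := SetRel.symmetrize_subset_self (R := F)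
  have hF'sym : ∀ a b : X, (a, b) ∈ F' → (b, a) ∈ F' := by
    intro a b h; exact ⟨h.2, h.1⟩
  have hF'refl : ∀ a : X, (a, a) ∈ F' := fun a => refl_mem_uniformity hF'mem
  have hF'S : F' ⊆ S := fun z hz => hFS (hF'F hz)
  have hF'E : F' ⊆ E := fun z hz => hSE (hF'S hz)
  obtain ⟨p⟩ := hjoin x₀ x
  obtain ⟨q⟩ := hjoin x₀ y
  have hcp := p.chain F' hF'mem
  have hcq := q.chain F' hF'mem
  have hcp_h := p.head F' hF'mem
  have hcp_l := p.last F' hF'mem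
  have hcq_h := q.head F' hF'mem
  have hcq_l := q.last F' hF'mem
  set cp := p.c F' with hcpdef
  set cq := q.c F' with hcqdef
  have hcqrev_ne : cq.reverse ≠ [] := by
    simp only [ne_eq, List.reverse_eq_nil_iff]
    exact List.ne_nil_of_head?_eq_some' hcq_h
  -- the loop `cp ++ cq.reverse` at `x₀`
  have hlchain : IsEChain F (cp ++ cq.reverse) := by
    refine List.IsChain.append (hcp.imp fun a b h => hF'F h) ?_ ?_
    · rw [List.isChain_reverse]
      exact hcq.imp fun a b h => hF'F (hF'sym _ _ h)
    · intro a ha b hb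
      rw [hcp_l, Option.mem_def, Option.some.injEq] at ha
      rw [List.head?_reverse, hcq_l, Option.mem_def, Option.some.injEq] at hb
      subst ha; subst hb
      exact hF'F hxy
  have hlhead : (cp ++ cq.reverse).head? = some x₀ := by
    rw [List.head?_append_of_ne_nil _ (List.ne_nil_of_head?_eq_some' hcp_h)]
    exact hcp_h
  have hllast : (cp ++ cq.reverse).getLast? = some x₀ := by
    rw [List.getLast?_append_of_ne_nil _ hcqrev_ne, List.getLast?_reverse]
    exact hcq_h
  obtain ⟨g, hg⟩ := hML (cp ++ cq.reverse) hlchain hlhead hllast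
  have hxyE : (x, y) ∈ E := hF'E hxy
  refine ⟨(p.rev'.concat g).concat q, hxyE, ?_⟩
  show RipsHtpy E ((p.c S).reverse ++ g.c E ++ q.c E) [x, y]
  -- replace `g.c E` by the loop
  have h1 : RipsHtpy E (g.c E) (cp ++ cq.reverse) :=
    (g.compat E hE S hSmem hSE).symm.trans (hg.mono hSE)
  have s01 : RipsHtpy E ((p.c S).reverse ++ (g.c E ++ q.c E))
      ((p.c S).reverse ++ (cp ++ (cq.reverse ++ q.c E))) := by
    simpa [List.append_assoc] using h1.congrAux (p.c S).reverse (q.c E)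
  -- replace `(p.c S).reverse` by `cp.reverse`
  have hrevp : RipsHtpy E (p.c S).reverse cp.reverse :=
    (((p.compat S hSmem F' hF'mem hF'S).rev hSsym).symm).mono hSE
  have s12 : RipsHtpy E ((p.c S).reverse ++ (cp ++ (cq.reverse ++ q.c E)))
      (cp.reverse ++ (cp ++ (cq.reverse ++ q.c E))) := by
    simpa [List.append_assoc] using hrevp.congrAux [] (cp ++ (cq.reverse ++ q.c E))
  -- replace `q.c E` by `cq`
  have hqE : RipsHtpy E (q.c E) cq := (q.compat E hE F' hF'mem hF'E).symm
  have s23 : RipsHtpy E (cp.reverse ++ (cp ++ (cq.reverse ++ q.c E)))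
      (cp.reverse ++ (cp ++ (cq.reverse ++ cq))) := by
    simpa [List.append_assoc] using hqE.congrAux (cp.reverse ++ (cp ++ cq.reverse)) []
  -- collapse the two back-and-forth pieces
  have hcol_p : RipsHtpy E (cp.reverse ++ cp) [x, x] :=
    (RipsHtpy.collapse hF'sym hF'refl cp hcp x hcp_l).mono hF'E
  have hcol_q : RipsHtpy E (cq.reverse ++ cq) [y, y] :=
    (RipsHtpy.collapse hF'sym hF'refl cq hcq y hcq_l).mono hF'E
  have s34 : RipsHtpy E (cp.reverse ++ (cp ++ (cq.reverse ++ cq)))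
      (x :: x :: (cq.reverse ++ cq)) := by
    simpa [List.append_assoc] using hcol_p.congrAux [] (cq.reverse ++ cq)
  have s45 : RipsHtpy E (x :: x :: (cq.reverse ++ cq)) [x, x, y, y] := by
    simpa [List.append_assoc] using hcol_q.congrAux [x, x] []
  -- remove the duplicated endpoints
  have s56 : RipsHtpy E [x, x, y, y] [x, y, y] :=
    (RipsHtpy.ins [] [y] x x y (refl_mem_uniformity hE) hxyE hxyE).symm
  have s67 : RipsHtpy E [x, y, y] [x, y] :=
    (RipsHtpy.ins [] [] x y y hxyE (refl_mem_uniformity hE) hxyE).symm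
  have := ((((((s01.trans s12).trans s23).trans s34).trans s45).trans s56).trans s67)
  simpa [List.append_assoc] using this
end

section
/- If f : X → Y is a surjection of uniform spaces that generates the uniform structure of Y and X is uniformly joinable, then Y is uniformly joinable. -/
open UniformSpace Filter Function
open scoped Uniformity

universe u v

variable {X : Type u} {Y : Type v}

/-- If a surjection `f : X → Y` generates the uniform structure of `Y` and `X` is
uniformly joinable, then `Y` is uniformly joinable. -/
theorem uniformlyJoinable_of_generates [UniformSpace X] [UniformSpace Y]
    (f : X → Y) (hsurj : Function.Surjective f) (hgen : GeneratesUS f)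
    (huj : UniformlyJoinable X) : UniformlyJoinable Y := by
  intro E' hE'
  obtain ⟨E, hE, hEE'⟩ := hgen.1 E' hE'
  obtain ⟨F, hF, hFjoin⟩ := huj E hE
  refine ⟨fimg f F, hgen.2 F hF, ?_⟩
  rintro y₁ y₂ ⟨⟨x₁, x₂⟩, hxF, hfx⟩
  obtain ⟨rfl, rfl⟩ : f x₁ = y₁ ∧ f x₂ = y₂ := Prod.mk.injEq .. ▸ hfx
  obtain ⟨p, hpE, hph⟩ := hFjoin x₁ x₂ hxF
  refine ⟨p.map f hgen.preimage, hEE' ⟨(x₁, x₂), hpE, rfl⟩, ?_⟩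
  have hsub : E ⊆ Prod.map f f ⁻¹' E' := fun q hq => hEE' ⟨q, hq, rfl⟩
  have h1 : RipsHtpy (Prod.map f f ⁻¹' E') (p.c (Prod.map f f ⁻¹' E')) [x₁, x₂] :=
    .trans (.symm (p.compat _ (hgen.preimage E' hE') E hE hsub))
      (by simpa using RipsHtpy.map (E' := Prod.map f f ⁻¹' E') id (fun a b h => hsub h) hph)
  exact RipsHtpy.map f (fun a b h => h) h1
end

section
/- Let f : X → Y be a function from a uniform space X having the chain lifting property. Then condition C2 (for every entourage E there is an entourage F such that any two F-chains with common origin are E-homotopic whenever their images are f(F)-homotopic) is equivalent to condition C3 (for every entourage E there is an entourage F such that any two F-chains starting at the same point with identical images under f are E-close, meaning corresponding entries are E-related). -/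
open UniformSpace Filter Function
open scoped Uniformity

universe u v

variable {X : Type u} {Y : Type v}

/-! ### Basic helpers -/

lemma IsEChain.mono {E F : Set (X × X)} (h : E ⊆ F) {l : List X} (hl : IsEChain E l) :
    IsEChain F l := List.IsChain.imp (fun _ _ hab => h hab) hl

lemma IsEChain.fmap (f : X → Y) {E : Set (X × X)} {l : List X} (hl : IsEChain E l) :
    IsEChain (fimg f E) (l.map f) :=
  List.isChain_map_of_isChain f (fun a b hab => ⟨(a, b), hab, rfl⟩) hl

lemma fimg_mono (f : X → Y) {E F : Set (X × X)} (h : E ⊆ F) : fimg f E ⊆ fimg f F :=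
  Set.image_mono h

lemma fimg_swap {f : X → Y} {F : Set (X × X)} (h : ∀ a b : X, (a, b) ∈ F → (b, a) ∈ F)
    {y₁ y₂ : Y} (hp : (y₁, y₂) ∈ fimg f F) : (y₂, y₁) ∈ fimg f F := by
  obtain ⟨⟨a, b⟩, hab, heq⟩ := hp
  obtain ⟨h1, h2⟩ := Prod.mk.injEq .. ▸ heq
  exact ⟨(b, a), h a b hab, by simp_all [Prod.map]⟩

lemma isEChain_insert {E : Set (X × X)} {l₁ l₂ : List X} {a v b : X}
    (h : IsEChain E (l₁ ++ a :: b :: l₂)) (hav : (a, v) ∈ E) (hvb : (v, b) ∈ E) :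
    IsEChain E (l₁ ++ a :: v :: b :: l₂) := by
  simp only [IsEChain, List.Chain', List.isChain_append_cons_cons, List.isChain_cons_cons] at h ⊢
  tauto

lemma isEChain_delete {E : Set (X × X)} {l₁ l₂ : List X} {a v b : X}
    (h : IsEChain E (l₁ ++ a :: v :: b :: l₂)) (hab : (a, b) ∈ E) :
    IsEChain E (l₁ ++ a :: b :: l₂) := by
  simp only [IsEChain, List.Chain', List.isChain_append_cons_cons, List.isChain_cons_cons] at h ⊢
  tauto

lemma head?_insert (l₁ l₂ : List X) (a v b : X) :
    (l₁ ++ a :: v :: b :: l₂).head? = (l₁ ++ a :: b :: l₂).head? := by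
  cases l₁ <;> simp

lemma getLast?_insert (l₁ l₂ : List X) (a v b : X) :
    (l₁ ++ a :: v :: b :: l₂).getLast? = (l₁ ++ a :: b :: l₂).getLast? := by
  rw [List.getLast?_append_cons, List.getLast?_append_cons]
  simp [List.getLast?_cons_cons]

lemma head?_append_left {l : List X} (h : l ≠ []) (s : List X) :
    (l ++ s).head? = l.head? := by
  cases l with
  | nil => exact absurd rfl h
  | cons a t => simp

lemma RipsHtpy.endpoints {E : Set (X × X)} {l l' : List X} (h : RipsHtpy E l l') :
    l.head? = l'.head? ∧ l.getLast? = l'.getLast? ∧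
      (l.length ≤ 1 → l = l') ∧ (l'.length ≤ 1 → l = l') := by
  induction h with
  | refl l => exact ⟨rfl, rfl, fun _ => rfl, fun _ => rfl⟩
  | symm _ ih => exact ⟨ih.1.symm, ih.2.1.symm, fun h => (ih.2.2.2 h).symm,
      fun h => (ih.2.2.1 h).symm⟩
  | trans _ _ ih₁ ih₂ =>
      refine ⟨ih₁.1.trans ih₂.1, ih₁.2.1.trans ih₂.2.1, fun h => ?_, fun h => ?_⟩
      · have e1 := ih₁.2.2.1 h
        exact e1.trans (ih₂.2.2.1 (e1 ▸ h))
      · have e2 := ih₂.2.2.2 h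
        exact (ih₁.2.2.2 (e2 ▸ h)).trans e2
  | ins l₁ l₂ a v b h1 h2 h3 =>
      refine ⟨(head?_insert l₁ l₂ a v b).symm, (getLast?_insert l₁ l₂ a v b).symm,
        fun h => ?_, fun h => ?_⟩
      · simp at h; omega
      · simp at h; omega

lemma RipsHtpy.append_right_s16 {E : Set (X × X)} {l l' : List X} (h : RipsHtpy E l l')
    (s : List X) : RipsHtpy E (l ++ s) (l' ++ s) := by
  induction h with
  | refl l => exact .refl _
  | symm _ ih => exact ih.symm
  | trans _ _ ih₁ ih₂ => exact ih₁.trans ih₂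
  | ins l₁ l₂ a v b h1 h2 h3 =>
      simpa [List.append_assoc] using RipsHtpy.ins (E := E) l₁ (l₂ ++ s) a v b h1 h2 h3

lemma exists_concat_of_getLast? {l : List X} {z : X} (h : l.getLast? = some z) :
    ∃ l', l = l' ++ [z] := by
  cases l with
  | nil => simp at h
  | cons a t =>
      refine ⟨(a :: t).dropLast, ?_⟩
      conv_lhs => rw [← List.dropLast_append_getLast (l := a :: t) (by simp)]
      rw [List.getLast?_eq_getLast (l := a :: t) (by simp)] at h
      simp only [Option.some.injEq] at h
      rw [h]

lemma isEChain_append_singleton {G : Set (X × X)} {l : List X} {z w : X}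
    (hl : IsEChain G l) (hz : l.getLast? = some z) (hzw : (z, w) ∈ G) :
    IsEChain G (l ++ [w]) := by
  rw [IsEChain, List.Chain', List.isChain_append]
  exact ⟨hl, List.isChain_singleton _, fun a ha b hb => by
    simp at hb; rw [hz] at ha; simp at ha; subst ha hb; exact hzw⟩

lemma ripsHtpy_pad_end {E : Set (X × X)} {l : List X} {z : X} (hl : IsEChain E l)
    (hz : l.getLast? = some z) (hlen : 2 ≤ l.length) (hzz : (z, z) ∈ E) :
    RipsHtpy E l (l ++ [z]) := by
  obtain ⟨l', rfl⟩ := exists_concat_of_getLast? hz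
  have hne : l' ≠ [] := by
    rintro rfl; simp at hlen
  obtain ⟨p, q, rfl⟩ : ∃ p q, l' = p ++ [q] := by
    obtain ⟨p, q, h⟩ := (List.eq_nil_or_concat l').resolve_left hne
    exact ⟨p, q, by simpa using h⟩
  have hqz : (q, z) ∈ E := by
    rw [IsEChain, List.Chain', List.append_assoc, List.singleton_append, List.isChain_append_cons_cons] at hl
    exact hl.2.1
  simpa [List.append_assoc] using RipsHtpy.ins (E := E) p [] q z z hqz hzz hqz

lemma ripsHtpy_pad_front {E : Set (X × X)} {l : List X} {h : X} (hl : IsEChain E l)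
    (hh : l.head? = some h) (hlen : 2 ≤ l.length) (hhh : (h, h) ∈ E) :
    RipsHtpy E l (h :: l) := by
  match l, hlen with
  | a :: b :: t, _ =>
    have hha : a = h := by simpa using hh
    subst hha
    have hab : (a, b) ∈ E := (List.isChain_cons_cons.mp hl).1
    simpa using RipsHtpy.ins (E := E) [] t a a b hhh hab hab
/-! ### Forall₂ helpers -/

lemma forall₂_getLast {α β : Type*} {R : α → β → Prop} {l₁ : List α} {l₂ : List β}
    (h : List.Forall₂ R l₁ l₂) {a : α} {b : β}
    (h₁ : l₁.getLast? = some a) (h₂ : l₂.getLast? = some b) : R a b := by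
  induction h with
  | nil => simp at h₁
  | @cons x y l₁' l₂' hr ht ih =>
      cases l₁' with
      | nil =>
          cases ht
          simp at h₁ h₂; subst h₁; subst h₂; exact hr
      | cons c t =>
          cases ht with
          | cons hr' ht' =>
              rw [List.getLast?_cons_cons] at h₁ h₂
              exact ih h₁ h₂

lemma forall₂_append_right_of_length {α β : Type*} {R : α → β → Prop}
    {l₁ l₂ : List α} {m₁ m₂ : List β} (h : List.Forall₂ R (l₁ ++ l₂) (m₁ ++ m₂))
    (hl : l₁.length = m₁.length) : List.Forall₂ R l₂ m₂ := by
  induction l₁ generalizing m₁ with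
  | nil =>
      cases m₁ with
      | nil => simpa using h
      | cons b s => simp at hl
  | cons a t ih =>
      cases m₁ with
      | nil => simp at hl
      | cons b s =>
          simp only [List.cons_append] at h
          cases h with
          | cons hr ht => exact ih ht (by simpa using hl)

lemma forall₂_replicate_right {α β : Type*} {R : α → β → Prop} {l : List α} {w : β} :
    ∀ {n : ℕ}, List.Forall₂ R l (List.replicate n w) → ∀ a ∈ l, R a w := by
  induction l with
  | nil => intro n _ a ha; simp at ha
  | cons x t ih =>
      intro n h a ha
      cases n with
      | zero => rw [List.replicate_zero] at h; cases h
      | succ m =>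
          rw [List.replicate_succ] at h
          cases h with
          | cons hr ht =>
              rcases List.mem_cons.mp ha with rfl | ha'
              · exact hr
              · exact ih ht a ha'

lemma map_eq_replicate' {α β : Type*} {f : α → β} {l : List α} {b : β}
    (h : ∀ a ∈ l, f a = b) : l.map f = List.replicate l.length b := by
  induction l with
  | nil => simp
  | cons x t ih =>
      simp only [List.map_cons, List.length_cons, List.replicate_succ]
      exact by rw [h x (by simp), ih (fun a ha => h a (by simp [ha]))]

/-! ### Ladder lemma -/

lemma ladderAux {E G : Set (X × X)} (hGE : G ⊆ E)
    (hGG : ∀ a b c : X, (a, b) ∈ G → (b, c) ∈ G → (a, c) ∈ E)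
    (hGsym : ∀ a b : X, (a, b) ∈ G → (b, a) ∈ G) :
    ∀ (us vs p : List X) (c : X),
      List.Forall₂ (fun a b => (a, b) ∈ G) us vs →
      IsEChain G us → IsEChain G (c :: vs) →
      (∀ y, us.head? = some y → ∃ m, (c, m) ∈ G ∧ (m, y) ∈ G) →
      us.getLast? = vs.getLast? →
      RipsHtpy E (p ++ c :: us) (p ++ c :: vs) := by
  intro us
  induction us with
  | nil =>
      intro vs p c hF _ _ _ _
      cases hF
      exact .refl _
  | cons y us' ih =>
      intro vs p c hF hus hcvs hfirst hlast
      cases hF with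
      | cons hyy' hF' =>
        rename_i y' vs'
        cases us' with
        | nil =>
            cases hF'
            simp only [List.getLast?_singleton] at hlast
            obtain rfl : y = y' := by simpa using hlast
            exact .refl _
        | cons y₂ t =>
            cases hF' with
            | cons hy₂ hF'' =>
              rename_i y₂' vs''
              -- facts
              have hyy₂ : (y, y₂) ∈ G := (List.isChain_cons_cons.mp hus).1
              have hcy' : (c, y') ∈ G := (List.isChain_cons_cons.mp hcvs).1
              have hvs' : IsEChain G (y' :: y₂' :: vs'') := (List.isChain_cons_cons.mp hcvs).2
              have hy'y₂' : (y', y₂') ∈ G := (List.isChain_cons_cons.mp hvs').1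
              obtain ⟨m, hcm, hmy⟩ := hfirst y rfl
              have hcyE : (c, y) ∈ E := hGG _ _ _ hcm hmy
              -- move 1 : insert y' between c and y
              have m1 : RipsHtpy E (p ++ c :: y :: y₂ :: t) (p ++ c :: y' :: y :: y₂ :: t) :=
                RipsHtpy.ins p (y₂ :: t) c y' y (hGE hcy') (hGE (hGsym _ _ hyy')) hcyE
              -- move 2 : delete y between y' and y₂
              have m2 : RipsHtpy E (p ++ c :: y' :: y₂ :: t) (p ++ c :: y' :: y :: y₂ :: t) := by
                simpa [List.append_assoc] using
                  RipsHtpy.ins (p ++ [c]) t y' y y₂ (hGE (hGsym _ _ hyy')) (hGE hyy₂)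
                    (hGG _ _ _ (hGsym _ _ hyy') hyy₂)
              -- recursion
              have m3 : RipsHtpy E (p ++ c :: y' :: y₂ :: t) (p ++ c :: y' :: y₂' :: vs'') := by
                have := ih (y₂' :: vs'') (p ++ [c]) y' (List.Forall₂.cons hy₂ hF'')
                  ((List.isChain_cons_cons.mp hus).2) hvs'
                  (fun z hz => by
                    simp only [List.head?_cons, Option.some.injEq] at hz
                    exact ⟨y, hGsym _ _ hyy', hz ▸ hyy₂⟩)
                  (by
                    have h1 : (y :: y₂ :: t).getLast? = (y₂ :: t).getLast? :=
                      List.getLast?_cons_cons ..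
                    have h2 : (y' :: y₂' :: vs'').getLast? = (y₂' :: vs'').getLast? :=
                      List.getLast?_cons_cons ..
                    rw [h1, h2] at hlast
                    exact hlast)
                simpa [List.append_assoc] using this
              exact (m1.trans m2.symm).trans m3

lemma ladder {E G : Set (X × X)} (hGE : G ⊆ E)
    (hGG : ∀ a b c : X, (a, b) ∈ G → (b, c) ∈ G → (a, c) ∈ E)
    (hGsym : ∀ a b : X, (a, b) ∈ G → (b, a) ∈ G) (hGrefl : ∀ a : X, (a, a) ∈ G)
    {u v : List X} (hF : List.Forall₂ (fun a b => (a, b) ∈ G) u v)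
    (hu : IsEChain G u) (hv : IsEChain G v)
    (hh : u.head? = v.head?) (hl : u.getLast? = v.getLast?) : RipsHtpy E u v := by
  cases hF with
  | nil => exact .refl _
  | cons hcc' hF' =>
      rename_i c c' us vs
      obtain rfl : c = c' := by simpa using hh
      have := ladderAux hGE hGG hGsym us vs [] c hF' (hu.tail) hv
        (fun y hy => ⟨c, hGrefl c, by
          cases us with
          | nil => simp at hy
          | cons z t =>
              simp only [List.head?_cons, Option.some.injEq] at hy
              exact hy ▸ (List.isChain_cons_cons.mp hu).1⟩)
        (by
          cases us with
          | nil =>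
              cases hF'
              rfl
          | cons z t =>
              cases hF' with
              | cons h1 h2 =>
                rename_i z' t'
                rw [List.getLast?_cons_cons, List.getLast?_cons_cons] at hl
                exact hl)
      simpa using this

/-! ### collapse of an excursion -/

lemma ripsHtpy_collapse {E E₂ : Set (X × X)} (hsub : E₂ ⊆ E)
    (hcomp : ∀ a b c : X, (a, b) ∈ E₂ → (a, c) ∈ E₂ → (b, c) ∈ E) :
    ∀ (T : List X) (p : List X) (w u : X), (∀ t ∈ T, (w, t) ∈ E₂) → (w, u) ∈ E₂ →
      RipsHtpy E (p ++ w :: (T ++ [u])) (p ++ [w, u]) := by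
  intro T
  induction T with
  | nil => intro p w u _ _; exact .refl _
  | cons t₀ T' ih =>
      intro p w u hT hu
      have ht₀ : (w, t₀) ∈ E₂ := hT t₀ (by simp)
      cases T' with
      | nil =>
          have : RipsHtpy E (p ++ w :: u :: []) (p ++ w :: t₀ :: u :: []) :=
            RipsHtpy.ins p [] w t₀ u (hsub ht₀) (hcomp _ _ _ ht₀ hu) (hsub hu)
          simpa using this.symm
      | cons t₁ T'' =>
          have ht₁ : (w, t₁) ∈ E₂ := hT t₁ (by simp)
          have m1 : RipsHtpy E (p ++ w :: t₁ :: (T'' ++ [u])) (p ++ w :: t₀ :: t₁ :: (T'' ++ [u])) :=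
            RipsHtpy.ins p (T'' ++ [u]) w t₀ t₁ (hsub ht₀) (hcomp _ _ _ ht₀ ht₁) (hsub ht₁)
          have m2 := ih p w u (fun t ht => hT t (by simp [ht])) hu
          exact ((by simpa using m1.symm : RipsHtpy E (p ++ w :: ((t₀ :: t₁ :: T'') ++ [u]))
            (p ++ w :: ((t₁ :: T'') ++ [u])))).trans m2

/-! ### Elementary moves -/

def ElemMove (R : Set (Y × Y)) (c d : List Y) : Prop :=
  ∃ (l₁ l₂ : List Y) (a v b : Y), (a, v) ∈ R ∧ (v, b) ∈ R ∧ (a, b) ∈ R ∧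
    ((c = l₁ ++ a :: b :: l₂ ∧ d = l₁ ++ a :: v :: b :: l₂) ∨
     (d = l₁ ++ a :: b :: l₂ ∧ c = l₁ ++ a :: v :: b :: l₂))

lemma elemMove_symm {R : Set (Y × Y)} : Symmetric (ElemMove R) := by
  rintro c d ⟨l₁, l₂, a, v, b, h1, h2, h3, h4 | h4⟩
  · exact ⟨l₁, l₂, a, v, b, h1, h2, h3, Or.inr h4⟩
  · exact ⟨l₁, l₂, a, v, b, h1, h2, h3, Or.inl h4⟩

lemma ripsHtpy_to_rtg {R : Set (Y × Y)} {c d : List Y} (h : RipsHtpy R c d) :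
    Relation.ReflTransGen (ElemMove R) c d := by
  induction h with
  | refl l => exact .refl
  | symm _ ih => exact (@Relation.ReflTransGen.stdSymm _ _ ⟨fun a b h => elemMove_symm h⟩).symm _ _ ih
  | trans _ _ ih₁ ih₂ => exact ih₁.trans ih₂
  | ins l₁ l₂ a v b h1 h2 h3 =>
      exact Relation.ReflTransGen.single ⟨l₁, l₂, a, v, b, h1, h2, h3, Or.inl ⟨rfl, rfl⟩⟩

lemma ElemMove.chain {R : Set (Y × Y)} {c d : List Y} (h : ElemMove R c d)
    (hc : IsEChain R c) : IsEChain R d := by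
  obtain ⟨l₁, l₂, a, v, b, h1, h2, h3, ⟨rfl, rfl⟩ | ⟨rfl, rfl⟩⟩ := h
  · exact isEChain_insert hc h1 h2
  · exact isEChain_delete hc h3

lemma ElemMove.head?_eq {R : Set (Y × Y)} {c d : List Y} (h : ElemMove R c d) :
    c.head? = d.head? := by
  obtain ⟨l₁, l₂, a, v, b, _, _, _, ⟨rfl, rfl⟩ | ⟨rfl, rfl⟩⟩ := h
  · exact (head?_insert l₁ l₂ a v b).symm
  · exact head?_insert l₁ l₂ a v b

lemma ElemMove.getLast?_eq {R : Set (Y × Y)} {c d : List Y} (h : ElemMove R c d) :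
    c.getLast? = d.getLast? := by
  obtain ⟨l₁, l₂, a, v, b, _, _, _, ⟨rfl, rfl⟩ | ⟨rfl, rfl⟩⟩ := h
  · exact (getLast?_insert l₁ l₂ a v b).symm
  · exact getLast?_insert l₁ l₂ a v b

lemma rtg_chain {R : Set (Y × Y)} {c d : List Y}
    (h : Relation.ReflTransGen (ElemMove R) c d) (hc : IsEChain R c) : IsEChain R d := by
  induction h with
  | refl => exact hc
  | tail _ hm ih => exact hm.chain ih

lemma rtg_getLast? {R : Set (Y × Y)} {c d : List Y}
    (h : Relation.ReflTransGen (ElemMove R) c d) : c.getLast? = d.getLast? := by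
  induction h with
  | refl => rfl
  | tail _ hm ih => exact ih.trans hm.getLast?_eq
/-! ### decomposition of a lift along a decomposition of its image -/

lemma map_decomp {f : X → Y} {δ : List X} {l₁ l₂ : List Y} {a v b : Y}
    (h : δ.map f = l₁ ++ a :: v :: b :: l₂) :
    ∃ (P Q : List X) (da du db : X), δ = P ++ da :: du :: db :: Q ∧
      P.map f = l₁ ∧ f da = a ∧ f du = v ∧ f db = b ∧ Q.map f = l₂ := by
  rw [List.map_eq_append_iff] at h
  obtain ⟨P, r₁, rfl, hP, h1⟩ := h
  rw [List.map_eq_cons_iff] at h1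
  obtain ⟨da, r₂, rfl, ha, h2⟩ := h1
  rw [List.map_eq_cons_iff] at h2
  obtain ⟨du, r₃, rfl, hv, h3⟩ := h2
  rw [List.map_eq_cons_iff] at h3
  obtain ⟨db, Q, rfl, hb, h4⟩ := h3
  exact ⟨P, Q, da, du, db, rfl, hP, ha, hv, hb, h4⟩

lemma map_decomp2 {f : X → Y} {δ : List X} {l₁ l₂ : List Y} {a b : Y}
    (h : δ.map f = l₁ ++ a :: b :: l₂) :
    ∃ (P Q : List X) (da db : X), δ = P ++ da :: db :: Q ∧
      P.map f = l₁ ∧ f da = a ∧ f db = b ∧ Q.map f = l₂ := by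
  rw [List.map_eq_append_iff] at h
  obtain ⟨P, r₁, rfl, hP, h1⟩ := h
  rw [List.map_eq_cons_iff] at h1
  obtain ⟨da, r₂, rfl, ha, h2⟩ := h1
  rw [List.map_eq_cons_iff] at h2
  obtain ⟨db, Q, rfl, hb, h3⟩ := h2
  exact ⟨P, Q, da, db, rfl, hP, ha, hb, h3⟩

lemma getLast?_isSome {l : List X} (h : l ≠ []) : ∃ z, l.getLast? = some z := by
  cases l with
  | nil => exact absurd rfl h
  | cons a t => exact ⟨(a :: t).getLast (by simp), List.getLast?_eq_getLast (l := a :: t) (by simp)⟩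

/-! ### The step lemma: transporting a lift across one elementary move -/

section Step

variable {f : X → Y} {E E₁ F₁ H : Set (X × X)} {R : Set (Y × Y)}

lemma step_core
    (hE₁refl : ∀ a : X, (a, a) ∈ E₁) (hE₁sym : ∀ a b : X, (a, b) ∈ E₁ → (b, a) ∈ E₁)
    (hE₁E : E₁ ⊆ E) (hE₁₁E : ∀ a b c : X, (a, b) ∈ E₁ → (b, c) ∈ E₁ → (a, c) ∈ E)
    (hHE₁ : H ⊆ E₁) (hHF₁ : H ⊆ F₁)
    (hHHF₁ : ∀ a b c : X, (a, b) ∈ H → (b, c) ∈ H → (a, c) ∈ F₁)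
    (hHHE₁ : ∀ a b c : X, (a, b) ∈ H → (b, c) ∈ H → (a, c) ∈ E₁)
    (hC3₁ : ∀ γ₁ γ₂ : List X, IsEChain F₁ γ₁ → IsEChain F₁ γ₂ → γ₁.head? = γ₂.head? →
      γ₁.map f = γ₂.map f → List.Forall₂ (fun a b => (a, b) ∈ E₁) γ₁ γ₂)
    (hlift : ∀ (x : X) (l : List Y), IsEChain R l → l.head? = some (f x) →
      ∃ l', IsEChain H l' ∧ l'.head? = some x ∧ l'.map f = l)
    {e e' : List Y} {δ : List X} {x : X}
    (hm : ElemMove R e e') (he : IsEChain R e)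
    (hδ : IsEChain H δ) (hδm : δ.map f = e) (hδh : δ.head? = some x) :
    ∃ (δ' : List X) (z z' : X), IsEChain H δ' ∧ δ'.map f = e' ∧ δ'.head? = some x ∧
      δ.getLast? = some z ∧ δ'.getLast? = some z' ∧ (z', z) ∈ E₁ ∧
      RipsHtpy E (δ ++ [z]) (δ' ++ [z]) := by
  have hHE : H ⊆ E := fun _ hp => hE₁E (hHE₁ hp)
  have hehead : e.head? = some (f x) := by
    rw [← hδm, List.head?_map, hδh]; rfl
  obtain ⟨l₁, l₂, a, v, b, hav, hvb, hab, hcase⟩ := hm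
  rcases hcase with ⟨he1, he2⟩ | ⟨he2, he1⟩
  · -- insertion : e = l₁ ++ a :: b :: l₂, e' = l₁ ++ a :: v :: b :: l₂
    subst he1; subst he2
    have he' : IsEChain R (l₁ ++ a :: v :: b :: l₂) := isEChain_insert he hav hvb
    have hh' : (l₁ ++ a :: v :: b :: l₂).head? = some (f x) := by
      rw [head?_insert]; exact hehead
    obtain ⟨δ'', hδ''H, hδ''h, hδ''m⟩ := hlift x _ he' hh'
    obtain ⟨P, Q, da, du, db, rfl, hP, hfa, hfv, hfb, hQ⟩ := map_decomp hδ''m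
    -- chain facts of δ''
    have hc := hδ''H
    rw [IsEChain, List.Chain', List.isChain_append_cons_cons, List.isChain_cons_cons] at hc
    obtain ⟨hcP, hdadu, hdudb, hcQ⟩ := hc
    -- the deletion of the inserted vertex
    have hmk : ∀ S : Set (X × X), H ⊆ S → (da, db) ∈ S → IsEChain S (P ++ da :: db :: Q) := by
      intro S hS hdadb
      rw [IsEChain, List.Chain', List.isChain_append_cons_cons]
      exact ⟨(List.IsChain.imp (fun _ _ h => hS h) hcP), hdadb,
        (List.IsChain.imp (fun _ _ h => hS h) hcQ)⟩
    have hδtF₁ : IsEChain F₁ (P ++ da :: db :: Q) := hmk F₁ hHF₁ (hHHF₁ _ _ _ hdadu hdudb)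
    have hδtE₁ : IsEChain E₁ (P ++ da :: db :: Q) := hmk E₁ hHE₁ (hHHE₁ _ _ _ hdadu hdudb)
    have hδtm : (P ++ da :: db :: Q).map f = l₁ ++ a :: b :: l₂ := by
      simp [hP, hfa, hfb, hQ]
    have hδth : (P ++ da :: db :: Q).head? = some x := by
      rw [← head?_insert P Q da du db]; exact hδ''h
    have hFa : List.Forall₂ (fun a b => (a, b) ∈ E₁) δ (P ++ da :: db :: Q) :=
      hC3₁ δ _ (hδ.mono hHF₁) hδtF₁ (hδh.trans hδth.symm) (hδm.trans hδtm.symm)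
    -- endpoints
    have hδne : δ ≠ [] := by
      intro h; rw [h] at hδh; simp at hδh
    obtain ⟨z, hz⟩ := getLast?_isSome hδne
    obtain ⟨z', hz'⟩ := getLast?_isSome (l := P ++ da :: du :: db :: Q) (by simp)
    have hδtz : (P ++ da :: db :: Q).getLast? = some z' := by
      rw [← getLast?_insert P Q da du db]; exact hz'
    have hzz' : (z, z') ∈ E₁ := forall₂_getLast hFa hz hδtz
    -- ladder
    have hu : IsEChain E₁ (δ ++ [z]) :=
      isEChain_append_singleton (hδ.mono hHE₁) hz (hE₁refl z)
    have hvv : IsEChain E₁ ((P ++ da :: db :: Q) ++ [z]) :=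
      isEChain_append_singleton hδtE₁ hδtz (hE₁sym _ _ hzz')
    have hlad : RipsHtpy E (δ ++ [z]) ((P ++ da :: db :: Q) ++ [z]) := by
      refine ladder hE₁E hE₁₁E hE₁sym hE₁refl ?_ hu hvv ?_ ?_
      · exact List.rel_append hFa (List.Forall₂.cons (hE₁refl z) List.Forall₂.nil)
      · rw [head?_append_left hδne, head?_append_left (by simp)]
        exact hδh.trans hδth.symm
      · rw [List.getLast?_concat, List.getLast?_concat]
    have hins : RipsHtpy E ((P ++ da :: db :: Q) ++ [z]) ((P ++ da :: du :: db :: Q) ++ [z]) := by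
      simpa [List.append_assoc] using
        RipsHtpy.ins (E := E) P (Q ++ [z]) da du db (hHE hdadu) (hHE hdudb)
          (hE₁E (hHHE₁ _ _ _ hdadu hdudb))
    exact ⟨P ++ da :: du :: db :: Q, z, z', hδ''H, hδ''m, hδ''h, hz, hz',
      hE₁sym _ _ hzz', hlad.trans hins⟩
  · -- deletion : e = l₁ ++ a :: v :: b :: l₂, e' = l₁ ++ a :: b :: l₂
    subst he1; subst he2
    obtain ⟨P, Q, da, du, db, rfl, hP, hfa, hfv, hfb, hQ⟩ := map_decomp hδm
    have hc := hδ
    rw [IsEChain, List.Chain', List.isChain_append_cons_cons, List.isChain_cons_cons] at hc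
    obtain ⟨hcP, hdadu, hdudb, hcQ⟩ := hc
    have hmk : ∀ S : Set (X × X), H ⊆ S → (da, db) ∈ S → IsEChain S (P ++ da :: db :: Q) := by
      intro S hS hdadb
      rw [IsEChain, List.Chain', List.isChain_append_cons_cons]
      exact ⟨(List.IsChain.imp (fun _ _ h => hS h) hcP), hdadb,
        (List.IsChain.imp (fun _ _ h => hS h) hcQ)⟩
    have hδtF₁ : IsEChain F₁ (P ++ da :: db :: Q) := hmk F₁ hHF₁ (hHHF₁ _ _ _ hdadu hdudb)
    have hδtE₁ : IsEChain E₁ (P ++ da :: db :: Q) := hmk E₁ hHE₁ (hHHE₁ _ _ _ hdadu hdudb)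
    have hδtm : (P ++ da :: db :: Q).map f = l₁ ++ a :: b :: l₂ := by
      simp [hP, hfa, hfb, hQ]
    have hδth : (P ++ da :: db :: Q).head? = some x := by
      rw [← head?_insert P Q da du db]; exact hδh
    have he' : IsEChain R (l₁ ++ a :: b :: l₂) := isEChain_delete he hab
    have hh' : (l₁ ++ a :: b :: l₂).head? = some (f x) := by
      rw [← head?_insert l₁ l₂ a v b]; exact hehead
    obtain ⟨δ'', hδ''H, hδ''h, hδ''m⟩ := hlift x _ he' hh'
    have hFa : List.Forall₂ (fun a b => (a, b) ∈ E₁) (P ++ da :: db :: Q) δ'' :=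
      hC3₁ _ δ'' hδtF₁ (hδ''H.mono hHF₁) (hδth.trans hδ''h.symm) (hδtm.trans hδ''m.symm)
    obtain ⟨z, hz⟩ := getLast?_isSome (l := P ++ da :: du :: db :: Q) (by simp)
    have hδtz : (P ++ da :: db :: Q).getLast? = some z := by
      rw [← getLast?_insert P Q da du db]; exact hz
    have hδ''ne : δ'' ≠ [] := by
      intro h; rw [h] at hδ''h; simp at hδ''h
    obtain ⟨z', hz'⟩ := getLast?_isSome hδ''ne
    have hzz' : (z, z') ∈ E₁ := forall₂_getLast hFa hδtz hz'
    have hdel : RipsHtpy E ((P ++ da :: du :: db :: Q) ++ [z]) ((P ++ da :: db :: Q) ++ [z]) := by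
      refine RipsHtpy.symm ?_
      simpa [List.append_assoc] using
        RipsHtpy.ins (E := E) P (Q ++ [z]) da du db (hHE hdadu) (hHE hdudb)
          (hE₁E (hHHE₁ _ _ _ hdadu hdudb))
    have hu : IsEChain E₁ ((P ++ da :: db :: Q) ++ [z]) :=
      isEChain_append_singleton hδtE₁ hδtz (hE₁refl z)
    have hvv : IsEChain E₁ (δ'' ++ [z]) :=
      isEChain_append_singleton (hδ''H.mono hHE₁) hz' (hE₁sym _ _ hzz')
    have hlad : RipsHtpy E ((P ++ da :: db :: Q) ++ [z]) (δ'' ++ [z]) := by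
      refine ladder hE₁E hE₁₁E hE₁sym hE₁refl ?_ hu hvv ?_ ?_
      · exact List.rel_append hFa (List.Forall₂.cons (hE₁refl z) List.Forall₂.nil)
      · rw [head?_append_left (by simp), head?_append_left hδ''ne]
        exact hδth.trans hδ''h.symm
      · rw [List.getLast?_concat, List.getLast?_concat]
    exact ⟨δ'', z, z', hδ''H, hδ''m, hδ''h, hz, hz', hE₁sym _ _ hzz', hdel.trans hlad⟩

end Step
/-! ### The main lemma: transporting a lift along a whole homotopy -/

section Main

variable {f : X → Y} {E E₁ F₁ H : Set (X × X)} {R : Set (Y × Y)}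

lemma main_lift
    (hE₁refl : ∀ a : X, (a, a) ∈ E₁) (hE₁sym : ∀ a b : X, (a, b) ∈ E₁ → (b, a) ∈ E₁)
    (hE₁E : E₁ ⊆ E) (hE₁₁E : ∀ a b c : X, (a, b) ∈ E₁ → (b, c) ∈ E₁ → (a, c) ∈ E)
    (hHE₁ : H ⊆ E₁) (hHF₁ : H ⊆ F₁)
    (hHHF₁ : ∀ a b c : X, (a, b) ∈ H → (b, c) ∈ H → (a, c) ∈ F₁)
    (hHHE₁ : ∀ a b c : X, (a, b) ∈ H → (b, c) ∈ H → (a, c) ∈ E₁)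
    (hC3₁ : ∀ γ₁ γ₂ : List X, IsEChain F₁ γ₁ → IsEChain F₁ γ₂ → γ₁.head? = γ₂.head? →
      γ₁.map f = γ₂.map f → List.Forall₂ (fun a b => (a, b) ∈ E₁) γ₁ γ₂)
    (hlift : ∀ (x : X) (l : List Y), IsEChain R l → l.head? = some (f x) →
      ∃ l', IsEChain H l' ∧ l'.head? = some x ∧ l'.map f = l)
    {c d : List Y} (hrtg : Relation.ReflTransGen (ElemMove R) c d) (hcc : IsEChain R c)
    {γ : List X} {x : X} (hγ : IsEChain H γ) (hγm : γ.map f = c) (hγh : γ.head? = some x)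
    (hγne : γ ≠ []) :
    ∃ (δ T : List X) (z zc : X), IsEChain H δ ∧ δ.map f = d ∧ δ.head? = some x ∧
      δ.getLast? = some z ∧ γ.getLast? = some zc ∧
      IsEChain E₁ (z :: (T ++ [zc])) ∧ (∀ t ∈ T, f t = f zc) ∧
      RipsHtpy E (γ ++ [zc]) (δ ++ (T ++ [zc])) := by
  induction hrtg with
  | refl =>
      obtain ⟨zc, hzc⟩ := getLast?_isSome hγne
      exact ⟨γ, [], zc, zc, hγ, hγm, hγh, hzc, hzc,
        by simp [IsEChain, List.Chain', List.isChain_pair]; exact hE₁refl zc,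
        by simp, by simpa using RipsHtpy.refl (γ ++ [zc])⟩
  | @tail e e' hre hmove ih =>
      obtain ⟨δe, T, ze, zc, hδe, hδem, hδeh, hze, hzc, hchainT, hTmap, hhtpy⟩ := ih
      have he2 : IsEChain R e := rtg_chain hre hcc
      obtain ⟨δ', z₀, z', hδ'H, hδ'm, hδ'h, hz₀, hz', hz'ze, hstep⟩ :=
        step_core hE₁refl hE₁sym hE₁E hE₁₁E hHE₁ hHF₁ hHHF₁ hHHE₁ hC3₁ hlift
          hmove he2 hδe hδem hδeh
      have hzeq : z₀ = ze := by
        rw [hze] at hz₀; injection hz₀ with h; exact h.symm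
      subst hzeq
      obtain ⟨D, rfl⟩ := exists_concat_of_getLast? hz₀
      obtain ⟨t₀, rest, hTz⟩ : ∃ t₀ rest, T ++ [zc] = t₀ :: rest := by
        cases T with
        | nil => exact ⟨zc, [], rfl⟩
        | cons s ss => exact ⟨s, ss ++ [zc], rfl⟩
      have hz₀t₀ : (z₀, t₀) ∈ E₁ := by
        have := hchainT
        rw [hTz, IsEChain, List.Chain', List.isChain_cons_cons] at this
        exact this.1
      -- pad : insert a duplicate of z₀
      have hpad : RipsHtpy E ((D ++ [z₀]) ++ (T ++ [zc])) (((D ++ [z₀]) ++ [z₀]) ++ (T ++ [zc])) := by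
        have := RipsHtpy.ins (E := E) D rest z₀ z₀ t₀ (hE₁E (hE₁refl z₀)) (hE₁E hz₀t₀)
          (hE₁E hz₀t₀)
        rw [hTz]
        simpa [List.append_assoc] using this
      have hstep' : RipsHtpy E (((D ++ [z₀]) ++ [z₀]) ++ (T ++ [zc])) ((δ' ++ [z₀]) ++ (T ++ [zc])) :=
        hstep.append_right_s16 (T ++ [zc])
      have htotal : RipsHtpy E (γ ++ [zc]) (δ' ++ ((z₀ :: T) ++ [zc])) := by
      -- δ' ++ (z₀ :: T ++ [zc]) = (δ' ++ [z₀]) ++ (T ++ [zc])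
        have e1 : δ' ++ ((z₀ :: T) ++ [zc]) = (δ' ++ [z₀]) ++ (T ++ [zc]) := by
          simp
        rw [e1]
        exact (hhtpy.trans hpad).trans hstep'
      have hfz₀ : f z₀ = f zc := by
        have e1 : ((D ++ [z₀]).map f).getLast? = e.getLast? := by rw [hδem]
        rw [List.getLast?_map] at e1
        simp only [List.getLast?_concat] at e1
        have e2 : (γ.map f).getLast? = c.getLast? := by rw [hγm]
        rw [List.getLast?_map, hzc] at e2
        have e3 : c.getLast? = e.getLast? := rtg_getLast? hre
        rw [← e3, ← e2] at e1
        simpa using e1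
      refine ⟨δ', z₀ :: T, z', zc, hδ'H, hδ'm, hδ'h, hz', hzc, ?_, ?_, htotal⟩
      · rw [IsEChain, List.Chain', List.cons_append, List.isChain_cons_cons]
        exact ⟨hz'ze, hchainT⟩
      · intro t ht
        rcases List.mem_cons.mp ht with rfl | ht'
        · exact hfz₀
        · exact hTmap t ht'

end Main
/-! ### key lemma for C2 → C3 -/

section Key

variable {f : X → Y}

lemma key_ab {E L G F : Set (X × X)}
    (hLsym : ∀ a b : X, (a, b) ∈ L → (b, a) ∈ L) (hLE : L ⊆ E)
    (hFG : F ⊆ G) (hFsym : ∀ a b : X, (a, b) ∈ F → (b, a) ∈ F)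
    (hGrefl : ∀ a : X, (a, a) ∈ G)
    (hC2 : ∀ α β : List X, IsEChain G α → IsEChain G β → α.head? = β.head? →
      EHomotopic (fimg f G) (α.map f) (β.map f) → EHomotopic L α β)
    {α β : List X} (hα : IsEChain F α) (hβ : IsEChain F β)
    (hh : α.head? = β.head?) (hm : α.map f = β.map f)
    (hlen : 2 ≤ α.length) {a b : X} (ha : α.getLast? = some a) (hb : β.getLast? = some b) :
    (a, b) ∈ E := by
  obtain ⟨x, xs, rfl⟩ : ∃ x xs, α = x :: xs := by
    cases α with
    | nil => simp at hlen
    | cons u us => exact ⟨u, us, rfl⟩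
  obtain ⟨x', ys, rfl⟩ : ∃ x' ys, β = x' :: ys := by
    cases β with
    | nil => simp at hb
    | cons u us => exact ⟨u, us, rfl⟩
  obtain rfl : x = x' := by simpa using hh
  have hmap' : xs.map f = ys.map f := by simpa using hm
  obtain ⟨x₂, xs', rfl⟩ : ∃ x₂ xs', xs = x₂ :: xs' := by
    cases xs with
    | nil => simp at hlen
    | cons u us => exact ⟨u, us, rfl⟩
  obtain ⟨y₂, ys', rfl⟩ : ∃ y₂ ys', ys = y₂ :: ys' := by
    cases ys with
    | nil => simp at hmap'
    | cons u us => exact ⟨u, us, rfl⟩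
  have hrevne : (x :: x₂ :: xs').reverse ≠ [] := by simp
  have hrev : IsEChain G (x :: x₂ :: xs').reverse := by
    rw [IsEChain, List.Chain', List.isChain_reverse]
    exact List.IsChain.imp (fun u v huv => hFG (hFsym _ _ huv)) hα
  have hrevlast : (x :: x₂ :: xs').reverse.getLast? = some x := by
    rw [List.getLast?_reverse]; rfl
  have hrevhead : (x :: x₂ :: xs').reverse.head? = some a := by
    rw [List.head?_reverse]; exact ha
  have hjunμ : (x, y₂) ∈ G := hFG (List.isChain_cons_cons.mp hβ).1
  have hjunν : (x, x₂) ∈ G := hFG (List.isChain_cons_cons.mp hα).1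
  have hμG : IsEChain G ((x :: x₂ :: xs').reverse ++ y₂ :: ys') := by
    rw [IsEChain, List.Chain', List.isChain_append]
    refine ⟨hrev, List.IsChain.imp (fun u v huv => hFG huv) (hβ.tail), ?_⟩
    intro u hu v hv
    rw [hrevlast] at hu
    simp only [List.head?_cons, Option.mem_def, Option.some.injEq] at hu hv
    subst hu; subst hv
    exact hjunμ
  have hνG : IsEChain G ((x :: x₂ :: xs').reverse ++ x₂ :: xs') := by
    rw [IsEChain, List.Chain', List.isChain_append]
    refine ⟨hrev, List.IsChain.imp (fun u v huv => hFG huv) (hα.tail), ?_⟩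
    intro u hu v hv
    rw [hrevlast] at hu
    simp only [List.head?_cons, Option.mem_def, Option.some.injEq] at hu hv
    subst hu; subst hv
    exact hjunν
  have hμh : ((x :: x₂ :: xs').reverse ++ y₂ :: ys').head? = some a := by
    rw [head?_append_left hrevne]; exact hrevhead
  have hνh : ((x :: x₂ :: xs').reverse ++ x₂ :: xs').head? = some a := by
    rw [head?_append_left hrevne]; exact hrevhead
  have hμl : ((x :: x₂ :: xs').reverse ++ y₂ :: ys').getLast? = some b := by
    rw [List.getLast?_append_cons]
    rw [List.getLast?_cons_cons] at hb; exact hb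
  have hνl : ((x :: x₂ :: xs').reverse ++ x₂ :: xs').getLast? = some a := by
    rw [List.getLast?_append_cons]
    rw [List.getLast?_cons_cons] at ha; exact ha
  have hmm : ((x :: x₂ :: xs').reverse ++ x₂ :: xs').map f =
      ((x :: x₂ :: xs').reverse ++ y₂ :: ys').map f := by
    simp only [List.map_append, List.map_cons, hmap']
  have hmchain : IsEChain (fimg f G) (((x :: x₂ :: xs').reverse ++ y₂ :: ys').map f) :=
    hμG.fmap f
  have hmne : ((x :: x₂ :: xs').reverse ++ y₂ :: ys').map f ≠ [] := by simp
  have hmlen : 2 ≤ (((x :: x₂ :: xs').reverse ++ y₂ :: ys').map f).length := by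
    simp
    omega
  have hmh : (((x :: x₂ :: xs').reverse ++ y₂ :: ys').map f).head? = some (f a) := by
    rw [List.head?_map, hμh]; rfl
  have hml : (((x :: x₂ :: xs').reverse ++ y₂ :: ys').map f).getLast? = some (f b) := by
    rw [List.getLast?_map, hμl]; rfl
  have hfbG : (f b, f b) ∈ fimg f G := ⟨(b, b), hGrefl b, rfl⟩
  have hfaG : (f a, f a) ∈ fimg f G := ⟨(a, a), hGrefl a, rfl⟩
  have p1 := ripsHtpy_pad_end hmchain hml hmlen hfbG
  have hchain2 := isEChain_append_singleton hmchain hml hfbG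
  have p2 := ripsHtpy_pad_front hchain2 (by rw [head?_append_left hmne]; exact hmh)
      (by rw [List.length_append]; omega) hfaG
  have hEH : EHomotopic (fimg f G) (((x :: x₂ :: xs').reverse ++ y₂ :: ys').map f)
      (((x :: x₂ :: xs').reverse ++ x₂ :: xs').map f) := by
    rw [hmm]
    exact ⟨f a, f a, f b, f b, hmh, hmh, hml, hml, hfaG, hfbG, p1.trans p2⟩
  have := hC2 _ _ hμG hνG (hμh.trans hνh.symm) hEH
  obtain ⟨xc, xd, yc, yd, _, _, hyc, hyd, _, hycyd, _⟩ := this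
  rw [hμl] at hyc
  rw [hνl] at hyd
  injection hyc with hyc
  injection hyd with hyd
  subst hyc; subst hyd
  exact hLE (hLsym _ _ hycyd)

lemma C2_to_C3_forall {E L G F : Set (X × X)}
    (hErefl : ∀ a : X, (a, a) ∈ E)
    (hLsym : ∀ a b : X, (a, b) ∈ L → (b, a) ∈ L) (hLE : L ⊆ E)
    (hFG : F ⊆ G) (hFsym : ∀ a b : X, (a, b) ∈ F → (b, a) ∈ F)
    (hGrefl : ∀ a : X, (a, a) ∈ G)
    (hC2 : ∀ α β : List X, IsEChain G α → IsEChain G β → α.head? = β.head? →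
      EHomotopic (fimg f G) (α.map f) (β.map f) → EHomotopic L α β) :
    ∀ α β : List X, IsEChain F α → IsEChain F β → α.head? = β.head? →
      α.map f = β.map f → List.Forall₂ (fun a b => (a, b) ∈ E) α β := by
  intro α
  induction α using List.reverseRecOn with
  | nil =>
      intro β _ _ _ hm
      obtain rfl : β = [] := by simpa using hm.symm
      exact List.Forall₂.nil
  | append_singleton α' a ih =>
      intro β hα hβ hh hm
      rcases List.eq_nil_or_concat β with rfl | ⟨β', b, hβc⟩
      · simp at hm
      rw [List.concat_eq_append] at hβc
      subst hβc
      obtain ⟨h1, h2⟩ : α'.map f = β'.map f ∧ f a = f b := by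
        have := hm
        simp only [List.map_append, List.map_cons, List.map_nil] at this
        obtain ⟨h1, h2⟩ := List.append_inj' this rfl
        exact ⟨h1, by simpa using h2⟩
      cases α' with
      | nil =>
          obtain rfl : β' = [] := by
            have : β'.map f = [] := h1.symm
            exact List.map_eq_nil_iff.mp this
          obtain rfl : a = b := by simpa using hh
          exact List.Forall₂.cons (hErefl a) List.Forall₂.nil
      | cons u us =>
          have hβ'ne : β' ≠ [] := by
            intro hc
            rw [hc] at h1
            simp at h1
          have hihres : List.Forall₂ (fun a b => (a, b) ∈ E) (u :: us) β' := by
            refine ih β' (List.IsChain.prefix hα (List.prefix_append _ _))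
              (List.IsChain.prefix hβ (List.prefix_append _ _)) ?_ h1
            rwa [head?_append_left (by simp), head?_append_left hβ'ne] at hh
          have hab : (a, b) ∈ E :=
            key_ab hLsym hLE hFG hFsym hGrefl hC2 hα hβ hh hm (by simp)
              (List.getLast?_concat) (List.getLast?_concat)
          exact List.rel_append hihres (List.Forall₂.cons hab List.Forall₂.nil)

end Key
/-! ### entourage bookkeeping -/

lemma sub_of_comp_sub [UniformSpace X] {t s : Set (X × X)} (ht : t ∈ 𝓤 X)
    (h : SetRel.comp t t ⊆ s) : t ⊆ s := fun p hp =>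
  h ⟨p.2, by simpa using hp, refl_mem_uniformity ht⟩

/-! ### The theorem -/

/-- If `f` has the chain lifting property then condition C2 (approximate uniqueness of
chain lifts up to `E`-homotopy) is equivalent to condition C3 (chains with identical
images are `E`-close). -/
theorem C2_iff_C3 [UniformSpace X] (f : X → Y)
    (hc1 : ∀ E ∈ 𝓤 X, ∃ F ∈ 𝓤 X, ∀ x : X, ∀ l : List Y,
        IsEChain (fimg f F) l → l.head? = some (f x) →
        ∃ l' : List X, IsEChain E l' ∧ l'.head? = some x ∧ l'.map f = l) :
    (∀ E ∈ 𝓤 X, ∃ F ∈ 𝓤 X, ∀ α β : List X,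
        IsEChain F α → IsEChain F β → α.head? = β.head? →
        EHomotopic (fimg f F) (α.map f) (β.map f) → EHomotopic E α β) ↔
      (∀ E ∈ 𝓤 X, ∃ F ∈ 𝓤 X, ∀ α β : List X,
        IsEChain F α → IsEChain F β → α.head? = β.head? →
        α.map f = β.map f → List.Forall₂ (fun a b => (a, b) ∈ E) α β) := by
  constructor
  · -- C2 → C3
    intro hC2 E hE
    obtain ⟨L, hLu, hLsymm, hLsub⟩ := comp_symm_mem_uniformity_sets hE
    have hLE : L ⊆ E := sub_of_comp_sub hLu hLsub
    obtain ⟨G, hGu, hGprop⟩ := hC2 L hLu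
    obtain ⟨F, hFu, hFsymm, hFsub⟩ := comp_symm_mem_uniformity_sets (inter_mem hGu hLu)
    have hFG : F ⊆ G := fun p hp => (sub_of_comp_sub hFu hFsub hp).1
    refine ⟨F, hFu, ?_⟩
    exact C2_to_C3_forall (fun a => refl_mem_uniformity hE)
      (fun a b hab => hLsymm.symm _ _ hab) hLE hFG
      (fun a b hab => hFsymm.symm _ _ hab) (fun a => refl_mem_uniformity hGu)
      hGprop
  · -- C3 → C2
    intro hC3 E hE
    obtain ⟨E₂, hE₂u, hE₂symm, hE₂sub⟩ := comp_symm_mem_uniformity_sets hE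
    have hE₂E : E₂ ⊆ E := sub_of_comp_sub hE₂u hE₂sub
    obtain ⟨F₀, hF₀u, hF₀⟩ := hC3 E₂ hE₂u
    obtain ⟨D₁, hD₁u, hD₁symm, hD₁sub⟩ := comp_symm_mem_uniformity_sets (inter_mem hF₀u hE₂u)
    have hD₁FE : D₁ ⊆ F₀ ∩ E₂ := sub_of_comp_sub hD₁u hD₁sub
    obtain ⟨E₁, hE₁u, hE₁symm, hE₁sub⟩ := comp_symm_mem_uniformity_sets hD₁u
    have hE₁D₁ : E₁ ⊆ D₁ := sub_of_comp_sub hE₁u hE₁sub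
    obtain ⟨F₁, hF₁u, hF₁⟩ := hC3 E₁ hE₁u
    obtain ⟨H, hHu, hHsymm, hHsub⟩ := comp_symm_mem_uniformity_sets (inter_mem hF₁u hE₁u)
    have hHFE : H ⊆ F₁ ∩ E₁ := sub_of_comp_sub hHu hHsub
    obtain ⟨F₂, hF₂u, hlift0⟩ := hc1 H hHu
    obtain ⟨F, hFu, hFsymm, hFsub⟩ := comp_symm_mem_uniformity_sets (inter_mem hHu hF₂u)
    have hFHF₂ : F ⊆ H ∩ F₂ := sub_of_comp_sub hFu hFsub
    -- pointwise facts
    have hE₁refl : ∀ a : X, (a, a) ∈ E₁ := fun a => refl_mem_uniformity hE₁u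
    have hE₁sym : ∀ a b : X, (a, b) ∈ E₁ → (b, a) ∈ E₁ :=
      fun a b hab => hE₁symm.symm _ _ hab
    have hE₂sym : ∀ a b : X, (a, b) ∈ E₂ → (b, a) ∈ E₂ :=
      fun a b hab => hE₂symm.symm _ _ hab
    have hE₁E : E₁ ⊆ E := fun p hp => hE₂E (hD₁FE (hE₁D₁ hp)).2
    have hE₁₁E : ∀ a b c : X, (a, b) ∈ E₁ → (b, c) ∈ E₁ → (a, c) ∈ E :=
      fun a b c h1 h2 => hE₂E (hD₁FE (hE₁sub ⟨b, h1, h2⟩)).2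
    have hHE₁ : H ⊆ E₁ := fun p hp => (hHFE hp).2
    have hHF₁ : H ⊆ F₁ := fun p hp => (hHFE hp).1
    have hHE : H ⊆ E := fun p hp => hE₁E (hHE₁ hp)
    have hHE₂ : H ⊆ E₂ := fun p hp => (hD₁FE (hE₁D₁ (hHE₁ hp))).2
    have hHHF₁ : ∀ a b c : X, (a, b) ∈ H → (b, c) ∈ H → (a, c) ∈ F₁ :=
      fun a b c h1 h2 => (hHsub ⟨b, h1, h2⟩).1
    have hHHE₁ : ∀ a b c : X, (a, b) ∈ H → (b, c) ∈ H → (a, c) ∈ E₁ :=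
      fun a b c h1 h2 => (hHsub ⟨b, h1, h2⟩).2
    have hFH : F ⊆ H := fun p hp => (hFHF₂ hp).1
    have hliftR : ∀ (x : X) (l : List Y), IsEChain (fimg f F) l → l.head? = some (f x) →
        ∃ l', IsEChain H l' ∧ l'.head? = some x ∧ l'.map f = l :=
      fun x l hl hh => hlift0 x l (hl.mono (fimg_mono f (fun p hp => (hFHF₂ hp).2))) hh
    refine ⟨F, hFu, ?_⟩
    intro α β hα hβ hhead hEH
    obtain ⟨xc, xd, yc, yd, h1, h2, h3, h4, h5, h6, h7⟩ := hEH
    have hαne : α ≠ [] := by rintro rfl; simp at h1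
    have hβne : β ≠ [] := by rintro rfl; simp at h2
    obtain ⟨x, hx⟩ : ∃ x, α.head? = some x := by
      cases α with
      | nil => exact absurd rfl hαne
      | cons u us => exact ⟨u, rfl⟩
    have hβx : β.head? = some x := by rw [← hhead]; exact hx
    obtain ⟨yα, hyα⟩ := getLast?_isSome hαne
    obtain ⟨yβ, hyβ⟩ := getLast?_isSome hβne
    have hxc : xc = f x := by
      have : (α.map f).head? = some (f x) := by rw [List.head?_map, hx]; rfl
      rw [h1] at this; injection this
    have hyc : yc = f yα := by
      have : (α.map f).getLast? = some (f yα) := by rw [List.getLast?_map, hyα]; rfl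
      rw [h3] at this; injection this
    have hyd : yd = f yβ := by
      have : (β.map f).getLast? = some (f yβ) := by rw [List.getLast?_map, hyβ]; rfl
      rw [h4] at this; injection this
    subst hxc; subst hyc; subst hyd
    -- α has at least two elements
    have hβpos : 0 < β.length := List.length_pos_iff.mpr hβne
    have hlen2 : 2 ≤ α.length := by
      by_contra hcon
      push_neg at hcon
      have h1le : (α.map f).length ≤ 1 := by rw [List.length_map]; omega
      have heq := (h7.endpoints).2.2.1 h1le
      have hlenabs := congrArg List.length heq
      simp only [List.length_map, List.length_cons, List.length_append,
        List.length_singleton] at hlenabs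
      omega
    -- lift of the final edge
    have hfyβα : (f yβ, f yα) ∈ fimg f F :=
      fimg_swap (fun a b hab => hFsymm.symm _ _ hab) h6
    have hwchain : IsEChain (fimg f F) [f yβ, f yα] := by
      rw [IsEChain, List.Chain', List.isChain_pair]; exact hfyβα
    obtain ⟨lw, hlwH, hlwh, hlwm⟩ := hliftR yβ [f yβ, f yα] hwchain (by simp)
    obtain ⟨w₁, t1, rfl, hfw₁, ht1⟩ := List.map_eq_cons_iff.mp hlwm
    obtain ⟨w, t2, rfl, hfw, ht2⟩ := List.map_eq_cons_iff.mp ht1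
    obtain rfl : t2 = [] := List.map_eq_nil_iff.mp ht2
    have hw₁ : w₁ = yβ := by simpa using hlwh
    have hyβw : (yβ, w) ∈ H := by
      rw [IsEChain, List.Chain', List.isChain_pair] at hlwH
      rw [← hw₁]; exact hlwH
    -- the canonical lift χ of the target chain
    have hβH : IsEChain H β := hβ.mono hFH
    have hχtail : IsEChain H (β ++ [w]) := isEChain_append_singleton hβH hyβ hyβw
    have hχH : IsEChain H (x :: (β ++ [w])) := by
      rw [IsEChain, List.Chain', List.isChain_cons]
      refine ⟨?_, hχtail⟩
      intro y hy
      rw [head?_append_left hβne, hβx] at hy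
      simp only [Option.mem_def, Option.some.injEq] at hy
      subst hy
      exact refl_mem_uniformity hHu
    have hχm : (x :: (β ++ [w])).map f = f x :: (β.map f ++ [f yα]) := by
      simp [hfw]
    -- transport the lift α along the homotopy
    have hαH : IsEChain H α := hα.mono hFH
    have hαR : IsEChain (fimg f F) (α.map f) := hα.fmap f
    obtain ⟨δ, T, z, zc, hδH, hδm, hδh, hδlast, hzc, hTchain, hTmap, hhtpy⟩ :=
      main_lift hE₁refl hE₁sym hE₁E hE₁₁E hHE₁ hHF₁ hHHF₁ hHHE₁ hF₁ hliftR
        (ripsHtpy_to_rtg h7) hαR hαH rfl hx hαne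
    obtain rfl : yα = zc := by
      rw [hyα] at hzc
      exact Option.some.inj hzc
    have hδne : δ ≠ [] := by rintro rfl; simp at hδh
    -- compare δ with χ
    have hFa : List.Forall₂ (fun a b => (a, b) ∈ E₁) δ (x :: (β ++ [w])) :=
      hF₁ δ _ (hδH.mono hHF₁) (hχH.mono hHF₁) (by rw [hδh]; rfl)
        (hδm.trans hχm.symm)
    have hχlast : (x :: (β ++ [w])).getLast? = some w := by
      rw [show x :: (β ++ [w]) = (x :: β) ++ [w] by simp]
      exact List.getLast?_concat
    have hzw : (z, w) ∈ E₁ := forall₂_getLast hFa hδlast hχlast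
    -- ladder between the two lifts, in context
    have hTtail : IsEChain E₁ (T ++ [yα]) := hTchain.tail
    have hzT : ∀ t₀, (T ++ [yα]).head? = some t₀ → (z, t₀) ∈ E₁ := by
      intro t₀ ht₀
      rw [IsEChain, List.Chain', List.isChain_cons] at hTchain
      exact hTchain.1 t₀ ht₀
    obtain ⟨t₀, ht₀⟩ : ∃ t₀, (T ++ [yα]).head? = some t₀ := by
      cases T with
      | nil => exact ⟨yα, rfl⟩
      | cons s ss => exact ⟨s, rfl⟩
    have huchain : IsEChain E₁ (δ ++ (T ++ [yα])) := by
      rw [IsEChain, List.Chain', List.isChain_append]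
      refine ⟨hδH.mono hHE₁, hTtail, ?_⟩
      intro u hu v hv
      rw [hδlast] at hu
      rw [ht₀] at hv
      simp only [Option.mem_def, Option.some.injEq] at hu hv
      subst hu; subst hv
      exact hzT _ ht₀
    have hvchain : IsEChain (SetRel.comp E₁ E₁) ((x :: (β ++ [w])) ++ (T ++ [yα])) := by
      rw [IsEChain, List.Chain', List.isChain_append]
      refine ⟨hχH.mono (F := SetRel.comp E₁ E₁)
          (fun p hp => ⟨p.2, by simpa using hHE₁ hp, hE₁refl _⟩),
        hTtail.mono (F := SetRel.comp E₁ E₁)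
          (fun p hp => ⟨p.2, by simpa using hp, hE₁refl _⟩), ?_⟩
      intro u hu v hv
      rw [hχlast] at hu
      rw [ht₀] at hv
      simp only [Option.mem_def, Option.some.injEq] at hu hv
      subst hu; subst hv
      exact ⟨z, hE₁sym _ _ hzw, hzT _ ht₀⟩
    have hlad2 : RipsHtpy E (δ ++ (T ++ [yα])) ((x :: (β ++ [w])) ++ (T ++ [yα])) := by
      refine ladder (G := SetRel.comp E₁ E₁)
        (fun p hp => hE₂E (hD₁FE (hE₁sub hp)).2)
        (fun a b c hab hbc => hE₂sub ⟨b, (hD₁FE (hE₁sub hab)).2, (hD₁FE (hE₁sub hbc)).2⟩)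
        (fun a b ⟨m, hm1, hm2⟩ => ⟨m, hE₁sym _ _ hm2, hE₁sym _ _ hm1⟩)
        (fun a => ⟨a, hE₁refl a, hE₁refl a⟩) ?_
        (huchain.mono (F := SetRel.comp E₁ E₁)
          (fun p hp => ⟨p.2, by simpa using hp, hE₁refl _⟩)) hvchain ?_ ?_
      · refine List.rel_append (hFa.imp ?_)
          (List.forall₂_same.mpr (fun t _ => ⟨t, hE₁refl t, hE₁refl t⟩))
        intro a b hab
        exact ⟨b, hab, hE₁refl b⟩
      · rw [head?_append_left hδne, head?_append_left (by simp : x :: (β ++ [w]) ≠ [])]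
        rw [hδh]; rfl
      · rw [List.getLast?_append_of_ne_nil δ (by simp),
          List.getLast?_append_of_ne_nil (x :: (β ++ [w])) (by simp)]
    -- pointwise closeness of T to w via C3 at level E₂
    have hUF₀ : IsEChain F₀ (δ ++ (T ++ [yα])) :=
      huchain.mono (fun p hp => (hD₁FE (hE₁D₁ hp)).1)
    have hVF₀ : IsEChain F₀ ((x :: (β ++ [w])) ++ List.replicate (T.length + 1) w) := by
      rw [IsEChain, List.Chain', List.isChain_append]
      refine ⟨hχH.mono (fun p hp => (hD₁FE (hE₁D₁ (hHE₁ hp))).1),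
        List.isChain_replicate_of_rel _ (refl_mem_uniformity hF₀u), ?_⟩
      intro u hu v hv
      rw [hχlast] at hu
      rw [List.replicate_succ] at hv
      simp only [List.head?_cons, Option.mem_def, Option.some.injEq] at hu hv
      subst hu; subst hv
      exact refl_mem_uniformity hF₀u
    have hTyαmap : (T ++ [yα]).map f = List.replicate (T.length + 1) (f yα) := by
      have := map_eq_replicate' (l := T ++ [yα]) (b := f yα) (fun t ht => by
        rcases List.mem_append.mp ht with h | h
        · exact hTmap t h
        · simp at h; subst h; rfl)
      simpa using this
    have hUm : (δ ++ (T ++ [yα])).map f =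
        ((x :: (β ++ [w])) ++ List.replicate (T.length + 1) w).map f := by
      rw [List.map_append (l₁ := δ), hδm, List.map_append (l₁ := x :: (β ++ [w])), hχm,
        hTyαmap, List.map_replicate, hfw]
    have hFa2 := hF₀ _ _ hUF₀ hVF₀
      (by rw [head?_append_left hδne, head?_append_left (by simp : x :: (β ++ [w]) ≠ [])]
          rw [hδh]; rfl) hUm
    have hlendelχ : δ.length = (x :: (β ++ [w])).length := by
      have := congrArg List.length (hδm.trans hχm.symm)
      simpa using this
    have hsplit := forall₂_append_right_of_length hFa2 hlendelχ
    have hpt : ∀ t ∈ T ++ [yα], (t, w) ∈ E₂ := forall₂_replicate_right hsplit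
    -- delete the excursion
    have hwT : ∀ t ∈ T, (w, t) ∈ E₂ := fun t ht => hE₂sym _ _ (hpt t (by simp [ht]))
    have hwyα : (w, yα) ∈ E₂ := hE₂sym _ _ (hpt yα (by simp))
    have hcompE : ∀ a b c : X, (a, b) ∈ E₂ → (a, c) ∈ E₂ → (b, c) ∈ E :=
      fun a b c ha hb => hE₂sub ⟨a, hE₂sym _ _ ha, hb⟩
    have hdel : RipsHtpy E ((x :: β) ++ w :: (T ++ [yα])) ((x :: β) ++ [w, yα]) :=
      ripsHtpy_collapse hE₂E hcompE T (x :: β) w yα hwT hwyα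
    -- final deletion of w
    obtain ⟨β', hβ'⟩ := exists_concat_of_getLast? hyβ
    have hfin : RipsHtpy E ((x :: β) ++ [w, yα]) (x :: (β ++ [yα])) := by
      rw [hβ']
      have hmv := RipsHtpy.ins (E := E) (x :: β') [] yβ w yα (hHE hyβw) (hE₂E hwyα)
        (hE₂sub ⟨w, hHE₂ hyβw, hwyα⟩)
      have h2 := hmv.symm
      have e1 : (x :: β') ++ yβ :: w :: yα :: [] = (x :: (β' ++ [yβ])) ++ [w, yα] := by simp
      have e2 : (x :: β') ++ yβ :: yα :: [] = x :: ((β' ++ [yβ]) ++ [yα]) := by simp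
      rw [e1, e2] at h2
      exact h2
    -- assemble everything
    have pad0 : RipsHtpy E α (α ++ [yα]) :=
      ripsHtpy_pad_end (hα.mono (fun p hp => hHE (hFH hp))) hyα hlen2 (refl_mem_uniformity hE)
    have hdel' : RipsHtpy E ((x :: (β ++ [w])) ++ (T ++ [yα])) ((x :: β) ++ [w, yα]) := by
      have hcast : (x :: (β ++ [w])) ++ (T ++ [yα]) = (x :: β) ++ w :: (T ++ [yα]) := by simp
      rw [hcast]
      exact hdel
    have total : RipsHtpy E α (x :: (β ++ [yα])) :=
      (((pad0.trans hhtpy).trans hlad2).trans hdel').trans hfin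
    have hyαyβ : (yα, yβ) ∈ E := hE₂sub ⟨w, hE₂sym _ _ hwyα, hE₂sym _ _ (hHE₂ hyβw)⟩
    exact ⟨x, x, yα, yβ, hx, hβx, hyα, hyβ, refl_mem_uniformity hE, hyαyβ, total⟩
end
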